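/- Let R carry both an r-dimensional right Novikov conformal superalgebra λ-product ∘_λ and an r-dimensional Lie conformal superalgebra λ-bracket [·_λ·] on the same ℤ/2ℤ-graded ℂ[T₁,…,T_r]-module, satisfying the compatibility [a_λ(b ∘_μ c)] + a ∘_λ [b_μ c] − [a_λ b] ∘_{λ+μ} c − (−1)^{αβ}([b_μ(a ∘_λ c)] + b ∘_μ [a_λ c]) = 0 for homogeneous a, b of parities α, β and all c. Define a ∗_λ b = a ∘_λ b + (−1)^{αβ} b ∘_{−λ−T} a. Then [a_λ(b ∘_μ c)] + a ∗_λ [b_μ c] + [(a ∘_λ b)_{λ+μ} c] − [(a ∗_λ b)_{λ+μ} c] − [a_λ b] ∗_{λ+μ} c − (−1)^{αβ}[b_μ(a ∗_λ c)] = 0 for homogeneous a, b of parities α, β and all c. -/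

import Mathlib

open Finsupp MvPolynomial
open scoped TensorProduct

namespace CA

noncomputable section

variable (r : ℕ) (R : Type*) [AddCommGroup R] [Module ℂ R]
  [Module (MvPolynomial (Fin r) ℂ) R] [IsScalarTower ℂ (MvPolynomial (Fin r) ℂ) R]

/-- Polynomials in `r` variables (the `λ`'s) with coefficients in `R`,
encoded via exponent multi-indices. -/
abbrev VP : Type _ := (Fin r →₀ ℕ) →₀ R

/-- Polynomials in two families of `r` variables (`λ`'s = `Sum.inl`, `μ`'s = `Sum.inr`)
with coefficients in `R`. -/
abbrev BP : Type _ := ((Fin r ⊕ Fin r) →₀ ℕ) →₀ R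

/-- The action of `T i` on `R`, as a `ℂ`-linear endomorphism. -/
def tAct (i : Fin r) : R →ₗ[ℂ] R where
  toFun v := (X i : MvPolynomial (Fin r) ℂ) • v
  map_add' u v := smul_add _ u v
  map_smul' c v := by
    simp only [RingHom.id_apply]
    rw [← algebraMap_smul (MvPolynomial (Fin r) ℂ) c v, ← mul_smul, mul_comm, mul_smul,
      algebraMap_smul]

/-- Multiplication by the variable `λ i` on `VP`. -/
def vLam (i : Fin r) : Module.End ℂ (VP r R) :=
  Finsupp.lmapDomain R ℂ (· + Finsupp.single i 1)

/-- The action of `T i` on the coefficients of an element of `VP`. -/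
def vT (i : Fin r) : Module.End ℂ (VP r R) :=
  Finsupp.mapRange.linearMap (tAct r R i)

/-- The substitution `λ ↦ -λ - T` on `VP`. -/
def vNeg (F : VP r R) : VP r R :=
  F.sum fun k v =>
    ((List.ofFn fun i : Fin r => (-(vLam r R i) - vT r R i) ^ (k i)).prod)
      (Finsupp.single 0 v)

/-- Multiplication by the monomial with exponent `e` on `BP`. -/
def bShift (e : (Fin r ⊕ Fin r) →₀ ℕ) : Module.End ℂ (BP r R) :=
  Finsupp.lmapDomain R ℂ (· + e)

/-- Multiplication by `λ i` on `BP`. -/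
def bLam (i : Fin r) : Module.End ℂ (BP r R) := bShift r R (Finsupp.single (Sum.inl i) 1)

/-- Multiplication by `μ i` on `BP`. -/
def bMu (i : Fin r) : Module.End ℂ (BP r R) := bShift r R (Finsupp.single (Sum.inr i) 1)

/-- The action of `T i` on the coefficients of an element of `BP`. -/
def bT (i : Fin r) : Module.End ℂ (BP r R) :=
  Finsupp.mapRange.linearMap (tAct r R i)

/-- Evaluation of an element of `VP` at a (commuting) family `s` of operators on `BP`:
`Σ_k λ^k v_k ↦ Σ_k s^k (v_k)`. -/
def ev (s : Fin r → Module.End ℂ (BP r R)) (F : VP r R) : BP r R :=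
  F.sum fun k v => ((List.ofFn fun i : Fin r => (s i) ^ (k i)).prod) (Finsupp.single 0 v)

/-- Extension of a `λ`-product `p` to a polynomial first argument, evaluated at the
family of operators `s`:  `(Σ_e x^e v_e)_s b = Σ_e x^e · (p v_e b)(s)`. -/
def evL (p : R → R → VP r R) (s : Fin r → Module.End ℂ (BP r R)) (F : BP r R) (b : R) :
    BP r R :=
  F.sum fun e v => bShift r R e (ev r R s (p v b))

/-- Extension of a `λ`-product `p` to a polynomial second argument, evaluated at the
family of operators `s`:  `a_s (Σ_e x^e w_e) = Σ_e x^e · (p a w_e)(s)`. -/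
def evR (p : R → R → VP r R) (s : Fin r → Module.End ℂ (BP r R)) (a : R) (G : BP r R) :
    BP r R :=
  G.sum fun e w => bShift r R e (ev r R s (p a w))

/-- The family `λ`. -/
def FL : Fin r → Module.End ℂ (BP r R) := fun i => bLam r R i
/-- The family `μ`. -/
def FM : Fin r → Module.End ℂ (BP r R) := fun i => bMu r R i
/-- The family `λ + μ`. -/
def FLM : Fin r → Module.End ℂ (BP r R) := fun i => bLam r R i + bMu r R i
/-- The family `-λ - T`. -/
def FNL : Fin r → Module.End ℂ (BP r R) := fun i => -(bLam r R i) - bT r R i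
/-- The family `-μ - T`. -/
def FNM : Fin r → Module.End ℂ (BP r R) := fun i => -(bMu r R i) - bT r R i
/-- The family `-λ - μ - T`. -/
def FNLM : Fin r → Module.End ℂ (BP r R) := fun i => -(bLam r R i) - bMu r R i - bT r R i

/-- The sign `(-1)^(αβ)` for parities `α β : ZMod 2`. -/
def sgn (α β : ZMod 2) : ℤ := (-1) ^ (α.val * β.val)

/-- `ℂ`-bilinearity of a `λ`-product. -/
def Bilin (p : R → R → VP r R) : Prop :=
  (∀ a b c : R, p (a + b) c = p a c + p b c) ∧
  (∀ a b c : R, p a (b + c) = p a b + p a c) ∧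
  (∀ (z : ℂ) (a b : R), p (z • a) b = z • p a b) ∧
  (∀ (z : ℂ) (a b : R), p a (z • b) = z • p a b)

/-- A `λ`-product is parity-preserving w.r.t. a grading `G`. -/
def ParityPres (G : ZMod 2 → Submodule ℂ R) (p : R → R → VP r R) : Prop :=
  ∀ (α β : ZMod 2) (a b : R), a ∈ G α → b ∈ G β → ∀ k, p a b k ∈ G (α + β)

/-- Conformal sesquilinearity: `(T_i a)_λ b = -λ_i (a_λ b)` and
`a_λ (T_i b) = (T_i + λ_i)(a_λ b)`. -/
def Sesq (p : R → R → VP r R) : Prop :=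
  ∀ (i : Fin r) (a b : R),
    p ((X i : MvPolynomial (Fin r) ℂ) • a) b = (-(vLam r R i)) (p a b) ∧
    p a ((X i : MvPolynomial (Fin r) ℂ) • b) = (vT r R i + vLam r R i) (p a b)

/-- `G` is a `ℤ/2ℤ`-grading of the `ℂ[T]`-module `R`. -/
def IsGraded (G : ZMod 2 → Submodule ℂ R) : Prop :=
  DirectSum.IsInternal G ∧
  ∀ (i : Fin r) (α : ZMod 2) (v : R), v ∈ G α →
    (X i : MvPolynomial (Fin r) ℂ) • v ∈ G α

/-- Conformal skew-symmetry `[a_λ b] = -(-1)^{αβ} [b_{-λ-T} a]`. -/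
def Skew (G : ZMod 2 → Submodule ℂ R) (q : R → R → VP r R) : Prop :=
  ∀ (α β : ZMod 2) (a b : R), a ∈ G α → b ∈ G β →
    q a b = -(sgn α β • vNeg r R (q b a))

/-- Conformal Jacobi identity
`[a_λ [b_μ c]] = [[a_λ b]_{λ+μ} c] + (-1)^{αβ} [b_μ [a_λ c]]`. -/
def Jacobi (G : ZMod 2 → Submodule ℂ R) (q : R → R → VP r R) : Prop :=
  ∀ (α β : ZMod 2) (a b c : R), a ∈ G α → b ∈ G β →
    evR r R q (FL r R) a (ev r R (FM r R) (q b c)) =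
      evL r R q (FLM r R) (ev r R (FL r R) (q a b)) c +
      sgn α β • evR r R q (FM r R) b (ev r R (FL r R) (q a c))

/-- `q` is an `r`-dimensional Lie conformal superalgebra `λ`-bracket on `R` graded by `G`. -/
def IsLieConfSuper (G : ZMod 2 → Submodule ℂ R) (q : R → R → VP r R) : Prop :=
  Bilin r R q ∧ ParityPres r R G q ∧ Sesq r R q ∧ Skew r R G q ∧ Jacobi r R G q

/-- Left Novikov conformal identity
`(a_λ b)_{λ+μ} c - a_λ (b_μ c) = (-1)^{αβ} ((b_μ a)_{λ+μ} c - b_μ (a_λ c))`. -/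
def NovLeft1 (G : ZMod 2 → Submodule ℂ R) (p : R → R → VP r R) : Prop :=
  ∀ (α β : ZMod 2) (a b c : R), a ∈ G α → b ∈ G β →
    evL r R p (FLM r R) (ev r R (FL r R) (p a b)) c -
      evR r R p (FL r R) a (ev r R (FM r R) (p b c)) =
    sgn α β • (evL r R p (FLM r R) (ev r R (FM r R) (p b a)) c -
      evR r R p (FM r R) b (ev r R (FL r R) (p a c)))

/-- Left Novikov conformal identity `(a_λ b)_{λ+μ} c = (-1)^{βγ} (a_λ c)_{-μ-T} b`. -/
def NovLeft2 (G : ZMod 2 → Submodule ℂ R) (p : R → R → VP r R) : Prop :=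
  ∀ (β γ : ZMod 2) (a b c : R), b ∈ G β → c ∈ G γ →
    evL r R p (FLM r R) (ev r R (FL r R) (p a b)) c =
      sgn β γ • evL r R p (FNM r R) (ev r R (FL r R) (p a c)) b

/-- `p` is an `r`-dimensional (left) Novikov conformal superalgebra `λ`-product. -/
def IsNovLeft (G : ZMod 2 → Submodule ℂ R) (p : R → R → VP r R) : Prop :=
  Bilin r R p ∧ ParityPres r R G p ∧ Sesq r R p ∧ NovLeft1 r R G p ∧ NovLeft2 r R G p

/-- Right Novikov conformal identity
`a_λ (b_μ c) - (a_λ b)_{λ+μ} c = (-1)^{βγ} (a_λ (c_{-μ-T} b) - (a_λ c)_{-μ-T} b)`. -/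
def NovRight1 (G : ZMod 2 → Submodule ℂ R) (p : R → R → VP r R) : Prop :=
  ∀ (β γ : ZMod 2) (a b c : R), b ∈ G β → c ∈ G γ →
    evR r R p (FL r R) a (ev r R (FM r R) (p b c)) -
      evL r R p (FLM r R) (ev r R (FL r R) (p a b)) c =
    sgn β γ • (evR r R p (FL r R) a (ev r R (FNM r R) (p c b)) -
      evL r R p (FNM r R) (ev r R (FL r R) (p a c)) b)

/-- Right Novikov conformal identity `a_λ (b_μ c) = (-1)^{αβ} b_μ (a_λ c)`. -/
def NovRight2 (G : ZMod 2 → Submodule ℂ R) (p : R → R → VP r R) : Prop :=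
  ∀ (α β : ZMod 2) (a b c : R), a ∈ G α → b ∈ G β →
    evR r R p (FL r R) a (ev r R (FM r R) (p b c)) =
      sgn α β • evR r R p (FM r R) b (ev r R (FL r R) (p a c))

/-- `p` is an `r`-dimensional right Novikov conformal superalgebra `λ`-product. -/
def IsNovRight (G : ZMod 2 → Submodule ℂ R) (p : R → R → VP r R) : Prop :=
  Bilin r R p ∧ ParityPres r R G p ∧ Sesq r R p ∧ NovRight1 r R G p ∧ NovRight2 r R G p

/-- The compatibility condition of a super Gel'fand-Dorfman conformal bialgebra:
`[(a_{-μ-T} b)_{-λ-T} c] + [a_{-μ-T} b]_{-λ-T} c - a_{-λ-μ-T} [b_{-λ-T} c]`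
`- (-1)^{βγ} [(a_{-λ-T} c)_{-μ-T} b] - (-1)^{βγ} [a_{-λ-T} c]_{-μ-T} b = 0`. -/
def GDCompat (G : ZMod 2 → Submodule ℂ R) (p q : R → R → VP r R) : Prop :=
  ∀ (β γ : ZMod 2) (a b c : R), b ∈ G β → c ∈ G γ →
    evL r R q (FNL r R) (ev r R (FNM r R) (p a b)) c +
    evL r R p (FNL r R) (ev r R (FNM r R) (q a b)) c -
    evR r R p (FNLM r R) a (ev r R (FNL r R) (q b c)) -
    sgn β γ • evL r R q (FNM r R) (ev r R (FNL r R) (p a c)) b -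
    sgn β γ • evL r R p (FNM r R) (ev r R (FNL r R) (q a c)) b = 0

/-- `(R, p, q)` is an `r`-dimensional super Gel'fand-Dorfman conformal bialgebra. -/
def IsGDConf (G : ZMod 2 → Submodule ℂ R) (p q : R → R → VP r R) : Prop :=
  IsNovLeft r R G p ∧ IsLieConfSuper r R G q ∧ GDCompat r R G p q

/-! Ungraded (purely even) versions. -/

def Skew' (q : R → R → VP r R) : Prop :=
  ∀ a b : R, q a b = -(vNeg r R (q b a))

def Jacobi' (q : R → R → VP r R) : Prop :=
  ∀ a b c : R,
    evR r R q (FL r R) a (ev r R (FM r R) (q b c)) =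
      evL r R q (FLM r R) (ev r R (FL r R) (q a b)) c +
      evR r R q (FM r R) b (ev r R (FL r R) (q a c))

/-- `q` is an `r`-dimensional Lie conformal algebra `λ`-bracket on `R`. -/
def IsLieConf' (q : R → R → VP r R) : Prop :=
  Bilin r R q ∧ Sesq r R q ∧ Skew' r R q ∧ Jacobi' r R q

def NovLeft1' (p : R → R → VP r R) : Prop :=
  ∀ a b c : R,
    evL r R p (FLM r R) (ev r R (FL r R) (p a b)) c -
      evR r R p (FL r R) a (ev r R (FM r R) (p b c)) =
    evL r R p (FLM r R) (ev r R (FM r R) (p b a)) c -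
      evR r R p (FM r R) b (ev r R (FL r R) (p a c))

def NovLeft2' (p : R → R → VP r R) : Prop :=
  ∀ a b c : R,
    evL r R p (FLM r R) (ev r R (FL r R) (p a b)) c =
      evL r R p (FNM r R) (ev r R (FL r R) (p a c)) b

/-- `p` is an `r`-dimensional (left) Novikov conformal algebra `λ`-product. -/
def IsNovLeft' (p : R → R → VP r R) : Prop :=
  Bilin r R p ∧ Sesq r R p ∧ NovLeft1' r R p ∧ NovLeft2' r R p

def GDCompat' (p q : R → R → VP r R) : Prop :=
  ∀ a b c : R,
    evL r R q (FNL r R) (ev r R (FNM r R) (p a b)) c +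
    evL r R p (FNL r R) (ev r R (FNM r R) (q a b)) c -
    evR r R p (FNLM r R) a (ev r R (FNL r R) (q b c)) -
    evL r R q (FNM r R) (ev r R (FNL r R) (p a c)) b -
    evL r R p (FNM r R) (ev r R (FNL r R) (q a c)) b = 0

/-- `(R, p, q)` is an `r`-dimensional Gel'fand-Dorfman conformal bialgebra. -/
def IsGDConf' (p q : R → R → VP r R) : Prop :=
  IsNovLeft' r R p ∧ IsLieConf' r R q ∧ GDCompat' r R p q

end

/-! Ordinary (non-conformal) structures on a complex vector space. -/

noncomputable section

variable (V : Type*) [AddCommGroup V] [Module ℂ V]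

/-- `ℂ`-bilinearity of an ordinary product. -/
def BilinV (m : V → V → V) : Prop :=
  (∀ a b c : V, m (a + b) c = m a c + m b c) ∧
  (∀ a b c : V, m a (b + c) = m a b + m a c) ∧
  (∀ (z : ℂ) (a b : V), m (z • a) b = z • m a b) ∧
  (∀ (z : ℂ) (a b : V), m a (z • b) = z • m a b)

def ParityPresV (G : ZMod 2 → Submodule ℂ V) (m : V → V → V) : Prop :=
  ∀ (α β : ZMod 2) (a b : V), a ∈ G α → b ∈ G β → m a b ∈ G (α + β)

/-- `br` is a Lie superalgebra bracket on `V` graded by `G`. -/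
def IsLieSuper (G : ZMod 2 → Submodule ℂ V) (br : V → V → V) : Prop :=
  BilinV V br ∧ ParityPresV V G br ∧
  (∀ (α β : ZMod 2) (a b : V), a ∈ G α → b ∈ G β → br a b = -(sgn α β • br b a)) ∧
  (∀ (α β : ZMod 2) (a b : V), a ∈ G α → b ∈ G β → ∀ c : V,
    br a (br b c) = br (br a b) c + sgn α β • br b (br a c))

/-- `m` is a (left) Novikov superalgebra product on `V` graded by `G`. -/
def IsNovSuper (G : ZMod 2 → Submodule ℂ V) (m : V → V → V) : Prop :=
  BilinV V m ∧ ParityPresV V G m ∧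
  (∀ (β γ : ZMod 2) (b c : V), b ∈ G β → c ∈ G γ → ∀ a : V,
    m (m a b) c = sgn β γ • m (m a c) b) ∧
  (∀ (α β : ZMod 2) (a b : V), a ∈ G α → b ∈ G β → ∀ c : V,
    m (m a b) c - m a (m b c) = sgn α β • (m (m b a) c - m b (m a c)))

/-- `m` is a supercommutative associative product on `V` graded by `G`. -/
def IsCommAssocSuper (G : ZMod 2 → Submodule ℂ V) (m : V → V → V) : Prop :=
  BilinV V m ∧ ParityPresV V G m ∧
  (∀ (α β : ZMod 2) (a b : V), a ∈ G α → b ∈ G β → m a b = sgn α β • m b a) ∧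
  (∀ a b c : V, m (m a b) c = m a (m b c))

/-- `(V, m, dot)` is a Novikov-Poisson superalgebra. -/
def IsNovPoissonSuper (G : ZMod 2 → Submodule ℂ V) (m dot : V → V → V) : Prop :=
  IsNovSuper V G m ∧ IsCommAssocSuper V G dot ∧
  (∀ (α β : ZMod 2) (a b : V), a ∈ G α → b ∈ G β → ∀ c : V,
    dot (m a b) c - m a (dot b c) = sgn α β • (dot (m b a) c - m b (dot a c))) ∧
  (∀ a b c : V, m (dot a b) c = dot a (m b c))

/-- `(V, br, m)` is a super Gel'fand-Dorfman bialgebra. -/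
def IsGDSuper (G : ZMod 2 → Submodule ℂ V) (br m : V → V → V) : Prop :=
  IsLieSuper V G br ∧ IsNovSuper V G m ∧
  (∀ (β γ : ZMod 2) (b c : V), b ∈ G β → c ∈ G γ → ∀ a : V,
    br (m a b) c + m (br a b) c - m a (br b c) -
      sgn β γ • br (m a c) b - sgn β γ • m (br a c) b = 0)

/-- `br` is a Lie algebra bracket on `V`. -/
def IsLieAlg (br : V → V → V) : Prop :=
  BilinV V br ∧ (∀ a b : V, br a b = -br b a) ∧
  (∀ a b c : V, br a (br b c) = br (br a b) c + br b (br a c))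

/-- `m` is a (left) Novikov algebra product on `V`. -/
def IsNovAlg (m : V → V → V) : Prop :=
  BilinV V m ∧ (∀ a b c : V, m (m a b) c = m (m a c) b) ∧
  (∀ a b c : V, m (m a b) c - m a (m b c) = m (m b a) c - m b (m a c))

/-- `m` is a commutative associative product on `V`. -/
def IsCommAssoc (m : V → V → V) : Prop :=
  BilinV V m ∧ (∀ a b : V, m a b = m b a) ∧ (∀ a b c : V, m (m a b) c = m a (m b c))

/-- `(V, m, dot)` is a Novikov-Poisson algebra. -/
def IsNovPoisson (m dot : V → V → V) : Prop :=
  IsNovAlg V m ∧ IsCommAssoc V dot ∧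
  (∀ a b c : V, dot (m a b) c - m a (dot b c) = dot (m b a) c - m b (dot a c)) ∧
  (∀ a b c : V, m (dot a b) c = dot a (m b c))

/-- `(V, br, dot)` is a Lie-Poisson algebra. -/
def IsLiePoisson (br dot : V → V → V) : Prop :=
  IsLieAlg V br ∧ IsCommAssoc V dot ∧
  (∀ a b c : V, br a (dot b c) = dot (br a b) c + dot b (br a c))

/-- `(V, br, m)` is a Gel'fand-Dorfman bialgebra. -/
def IsGD (br m : V → V → V) : Prop :=
  IsLieAlg V br ∧ IsNovAlg V m ∧
  (∀ a b c : V,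
    br (m a b) c + m (br a b) c - m a (br b c) - br (m a c) b - m (br a c) b = 0)

end

/-! Free `ℂ[T₁,…,T_r]`-modules on a graded vector space. -/

noncomputable section

variable (r : ℕ) (V : Type*) [AddCommGroup V] [Module ℂ V]

/-- The free `ℂ[T₁,…,T_r]`-module `ℂ[T₁,…,T_r] ⊗ V` on the vector space `V`. -/
abbrev TR : Type _ := MvPolynomial (Fin r) ℂ ⊗[ℂ] V

/-- The embedding of `V` into `ℂ[T₁,…,T_r] ⊗ V`. -/
def ιT : V → TR r V := fun v => (1 : MvPolynomial (Fin r) ℂ) ⊗ₜ[ℂ] v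

/-- The grading of `ℂ[T₁,…,T_r] ⊗ V` induced by a grading of `V` (the `T`'s are even). -/
def TG (G : ZMod 2 → Submodule ℂ V) : ZMod 2 → Submodule ℂ (TR r V) := fun α =>
  Submodule.span ℂ {x : TR r V |
    ∃ (f : MvPolynomial (Fin r) ℂ) (v : V), v ∈ G α ∧ x = f ⊗ₜ[ℂ] v}

end


namespace S17

noncomputable section

theorem ofFn_prod_mul {M : Type*} [Monoid M] : ∀ {n : ℕ} (f g : Fin n → M),
    (∀ i j, Commute (f i) (g j)) →
    (List.ofFn fun i => f i * g i).prod = (List.ofFn f).prod * (List.ofFn g).prod := by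
  intro n
  induction n with
  | zero => intro f g _; simp
  | succ n ih =>
    intro f g h
    rw [List.ofFn_succ, List.ofFn_succ, List.ofFn_succ, List.prod_cons, List.prod_cons,
      List.prod_cons, ih (fun i => f i.succ) (fun i => g i.succ) (fun i j => h _ _)]
    have h1 : Commute (g 0) (List.ofFn fun i : Fin n => f i.succ).prod :=
      Commute.list_prod_right _ _ (by
        intro x hx
        rw [List.mem_ofFn] at hx
        obtain ⟨i, rfl⟩ := hx
        exact (h i.succ 0).symm)
    rw [mul_assoc, mul_assoc, ← mul_assoc (g 0), h1.eq, mul_assoc]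

theorem ofFn_prod_eq_one {M : Type*} [Monoid M] {n : ℕ} (f : Fin n → M)
    (h : ∀ i, f i = 1) : (List.ofFn f).prod = 1 :=
  List.prod_eq_one (by intro x hx; rw [List.mem_ofFn] at hx; obtain ⟨i, rfl⟩ := hx; exact h i)

theorem ofFn_prod_single {M : Type*} [Monoid M] : ∀ {n : ℕ} (f : Fin n → M) (j : Fin n),
    (∀ i, i ≠ j → f i = 1) → (List.ofFn f).prod = f j := by
  intro n
  induction n with
  | zero => intro f j; exact j.elim0
  | succ n ih =>
    intro f j h
    rw [List.ofFn_succ, List.prod_cons]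
    rcases Fin.eq_zero_or_eq_succ j with hj | ⟨j', rfl⟩
    · subst hj
      rw [ofFn_prod_eq_one _ (fun i => h i.succ (Fin.succ_ne_zero i)), mul_one]
    · have h0 : f 0 = 1 := h 0 (Ne.symm (Fin.succ_ne_zero j'))
      rw [h0, one_mul, ih (fun i => f i.succ) j'
        (fun i hi => h i.succ (fun hh => hi (Fin.succ_injective _ hh)))]

variable (r : ℕ) (R : Type*) [AddCommGroup R] [Module ℂ R]
  [Module (MvPolynomial (Fin r) ℂ) R] [IsScalarTower ℂ (MvPolynomial (Fin r) ℂ) R]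

/-- Product of powers of a family of endomorphisms of `BP`. -/
def pf (S : Fin r → Module.End ℂ (BP r R)) (g : Fin r → ℕ) : Module.End ℂ (BP r R) :=
  (List.ofFn fun i => S i ^ g i).prod

theorem pf_zero (S : Fin r → Module.End ℂ (BP r R)) : pf r R S (fun _ => 0) = 1 :=
  ofFn_prod_eq_one _ (by simp)

theorem pf_add (S : Fin r → Module.End ℂ (BP r R)) (hS : ∀ i j, Commute (S i) (S j))
    (g g' : Fin r → ℕ) :
    pf r R S (fun i => g i + g' i) = pf r R S g * pf r R S g' := by
  rw [pf, pf, pf, ← ofFn_prod_mul _ _ (fun i j => (hS i j).pow_pow _ _)]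
  simp [pow_add]

theorem pf_one (S : Fin r → Module.End ℂ (BP r R)) (g : Fin r → ℕ) (hg : ∀ i, g i = 0) :
    pf r R S g = 1 :=
  ofFn_prod_eq_one _ (fun i => by rw [hg i, pow_zero])

theorem pf_single (S : Fin r → Module.End ℂ (BP r R)) (j : Fin r) (g : Fin r → ℕ)
    (hg : ∀ i, i ≠ j → g i = 0) (hj : g j = 1) : pf r R S g = S j := by
  rw [pf, ofFn_prod_single (fun i => S i ^ g i) j (fun i hi => by simp [hg i hi])]
  simp [hj]

theorem bShift_single (e d : (Fin r ⊕ Fin r) →₀ ℕ) (v : R) :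
    bShift r R e (Finsupp.single d v) = Finsupp.single (d + e) v := by
  simp [bShift, Finsupp.mapDomain_single]

theorem bT_single (i : Fin r) (d : (Fin r ⊕ Fin r) →₀ ℕ) (v : R) :
    bT r R i (Finsupp.single d v) = Finsupp.single d ((X i : MvPolynomial (Fin r) ℂ) • v) := by
  simp [bT, tAct, Finsupp.mapRange_single]

theorem end_ext {f g : Module.End ℂ (BP r R)}
    (h : ∀ e (v : R), f (Finsupp.single e v) = g (Finsupp.single e v)) : f = g :=
  Finsupp.lhom_ext h

theorem commute_bShift_bShift (e e' : (Fin r ⊕ Fin r) →₀ ℕ) :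
    Commute (bShift r R e) (bShift r R e') := by
  apply end_ext
  intro d v
  simp only [Module.End.mul_apply, bShift_single]
  rw [add_right_comm]

theorem commute_bT_bT (i j : Fin r) : Commute (bT r R i) (bT r R j) := by
  apply end_ext
  intro d v
  simp only [Module.End.mul_apply, bT_single]
  rw [smul_smul, smul_smul, mul_comm]

theorem commute_bShift_bT (e : (Fin r ⊕ Fin r) →₀ ℕ) (i : Fin r) :
    Commute (bShift r R e) (bT r R i) := by
  apply end_ext
  intro d v
  simp only [Module.End.mul_apply, bShift_single, bT_single]

/-- The additive subgroup of operators generated by shifts and by the `T`-action. -/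
def NN : AddSubgroup (Module.End ℂ (BP r R)) :=
  AddSubgroup.closure (Set.range (bShift r R) ∪ Set.range (bT r R))

theorem comm_of_mem {f g : Module.End ℂ (BP r R)} (hf : f ∈ NN r R) (hg : g ∈ NN r R) :
    Commute f g := by
  induction hf using AddSubgroup.closure_induction with
  | mem x hx =>
    induction hg using AddSubgroup.closure_induction with
    | mem y hy =>
      rcases hx with ⟨e, rfl⟩ | ⟨i, rfl⟩ <;> rcases hy with ⟨e', rfl⟩ | ⟨j, rfl⟩
      · exact commute_bShift_bShift r R e e'
      · exact commute_bShift_bT r R e j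
      · exact (commute_bShift_bT r R e' i).symm
      · exact commute_bT_bT r R i j
    | zero => exact Commute.zero_right _
    | add y z hy hz hcy hcz => exact hcy.add_right hcz
    | neg y hy hcy => exact hcy.neg_right
  | zero => exact Commute.zero_left _
  | add y z hy hz hcy hcz => exact hcy.add_left hcz
  | neg y hy hcy => exact hcy.neg_left

theorem bShift_mem (e : (Fin r ⊕ Fin r) →₀ ℕ) : bShift r R e ∈ NN r R :=
  AddSubgroup.subset_closure (Or.inl ⟨e, rfl⟩)

theorem bT_mem (i : Fin r) : bT r R i ∈ NN r R :=
  AddSubgroup.subset_closure (Or.inr ⟨i, rfl⟩)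

theorem bLam_mem (i : Fin r) : bLam r R i ∈ NN r R := bShift_mem r R _

theorem bMu_mem (i : Fin r) : bMu r R i ∈ NN r R := bShift_mem r R _

theorem FL_mem (i : Fin r) : FL r R i ∈ NN r R := bLam_mem r R i
theorem FM_mem (i : Fin r) : FM r R i ∈ NN r R := bMu_mem r R i
theorem FLM_mem (i : Fin r) : FLM r R i ∈ NN r R :=
  (NN r R).add_mem (bLam_mem r R i) (bMu_mem r R i)
theorem FNL_mem (i : Fin r) : FNL r R i ∈ NN r R :=
  (NN r R).sub_mem ((NN r R).neg_mem (bLam_mem r R i)) (bT_mem r R i)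
theorem FNM_mem (i : Fin r) : FNM r R i ∈ NN r R :=
  (NN r R).sub_mem ((NN r R).neg_mem (bMu_mem r R i)) (bT_mem r R i)
theorem FNLM_mem (i : Fin r) : FNLM r R i ∈ NN r R :=
  (NN r R).sub_mem ((NN r R).sub_mem ((NN r R).neg_mem (bLam_mem r R i)) (bMu_mem r R i))
    (bT_mem r R i)

theorem commute_pf {g : Module.End ℂ (BP r R)} (S : Fin r → Module.End ℂ (BP r R))
    (h : ∀ i, Commute g (S i)) (k : Fin r → ℕ) : Commute g (pf r R S k) :=
  Commute.list_prod_right _ _ (by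
    intro x hx
    rw [List.mem_ofFn] at hx
    obtain ⟨i, rfl⟩ := hx
    exact (h i).pow_right _)

theorem comm_apply {f g : Module.End ℂ (BP r R)} (h : Commute f g) (X : BP r R) :
    f (g X) = g (f X) := by
  have := DFunLike.congr_fun h.eq X
  simpa only [Module.End.mul_apply] using this

/-- Intertwining linear maps through list products of endomorphisms. -/
theorem prod_pull_aux {A B : Type*} [AddCommGroup A] [Module ℂ A] [AddCommGroup B] [Module ℂ B]
    (Φ : A →ₗ[ℂ] B) {ι : Type*} (M : ι → Module.End ℂ A) (M' : ι → Module.End ℂ B)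
    (h : ∀ i x, Φ (M i x) = M' i (Φ x)) :
    ∀ (L : List ι) (x : A), Φ ((L.map M).prod x) = ((L.map M').prod) (Φ x) := by
  intro L
  induction L with
  | nil => intro x; simp
  | cons i L ih =>
    intro x
    rw [List.map_cons, List.map_cons, List.prod_cons, List.prod_cons, Module.End.mul_apply,
      h, ih, Module.End.mul_apply]

theorem pow_pull {A B : Type*} [AddCommGroup A] [Module ℂ A] [AddCommGroup B] [Module ℂ B]
    (Φ : A →ₗ[ℂ] B) (M : Module.End ℂ A) (M' : Module.End ℂ B)
    (h : ∀ x, Φ (M x) = M' (Φ x)) : ∀ (n : ℕ) (x : A), Φ ((M ^ n) x) = (M' ^ n) (Φ x) := by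
  intro n
  induction n with
  | zero => intro x; simp
  | succ n ih =>
    intro x
    rw [pow_succ, pow_succ, Module.End.mul_apply, Module.End.mul_apply, ih, h]

theorem pf_pull {A B : Type*} [AddCommGroup A] [Module ℂ A] [AddCommGroup B] [Module ℂ B]
    (Φ : A →ₗ[ℂ] B) (M : Fin r → Module.End ℂ A) (M' : Fin r → Module.End ℂ B)
    (h : ∀ i x, Φ (M i x) = M' i (Φ x)) (k : Fin r → ℕ) (x : A) :
    Φ ((List.ofFn fun i => M i ^ k i).prod x) = (List.ofFn fun i => M' i ^ k i).prod (Φ x) := by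
  rw [List.ofFn_eq_map, List.ofFn_eq_map]
  exact prod_pull_aux Φ (fun i => M i ^ k i) (fun i => M' i ^ k i)
    (fun i x => pow_pull Φ (M i) (M' i) (h i) (k i) x) _ x

/-! ### The evaluation map bundled as a linear map -/

theorem ev_body_zero (S : Fin r → Module.End ℂ (BP r R)) (k : Fin r →₀ ℕ) :
    (List.ofFn fun i => S i ^ k i).prod (Finsupp.single (0 : (Fin r ⊕ Fin r) →₀ ℕ) (0 : R))
      = 0 := by
  rw [Finsupp.single_zero, map_zero]

def evHom (S : Fin r → Module.End ℂ (BP r R)) : VP r R →ₗ[ℂ] BP r R where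
  toFun := ev r R S
  map_add' F G := by
    simp only [ev]
    apply Finsupp.sum_add_index' (fun k => ev_body_zero r R S k)
    intro k v w
    rw [Finsupp.single_add, map_add]
  map_smul' z F := by
    simp only [ev, RingHom.id_apply]
    rw [Finsupp.sum_smul_index' (fun k => ev_body_zero r R S k), Finsupp.smul_sum]
    apply Finsupp.sum_congr
    intro k _
    rw [← Finsupp.smul_single, map_smul]

theorem evHom_apply (S : Fin r → Module.End ℂ (BP r R)) (F : VP r R) :
    evHom r R S F = ev r R S F := rfl

theorem ev_add (S : Fin r → Module.End ℂ (BP r R)) (F G : VP r R) :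
    ev r R S (F + G) = ev r R S F + ev r R S G := map_add (evHom r R S) F G

theorem ev_zero (S : Fin r → Module.End ℂ (BP r R)) : ev r R S (0 : VP r R) = 0 :=
  map_zero (evHom r R S)

theorem ev_neg (S : Fin r → Module.End ℂ (BP r R)) (F : VP r R) :
    ev r R S (-F) = -(ev r R S F) := map_neg (evHom r R S) F

theorem ev_zsmul (S : Fin r → Module.End ℂ (BP r R)) (n : ℤ) (F : VP r R) :
    ev r R S (n • F) = n • ev r R S F := map_zsmul (evHom r R S) n F

theorem ev_single (S : Fin r → Module.End ℂ (BP r R)) (k : Fin r →₀ ℕ) (v : R) :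
    ev r R S (Finsupp.single k v)
      = (List.ofFn fun i => S i ^ k i).prod (Finsupp.single 0 v) := by
  simp only [ev]
  exact Finsupp.sum_single_index (ev_body_zero r R S k)

theorem ev_single_zero (S : Fin r → Module.End ℂ (BP r R)) (v : R) :
    ev r R S (Finsupp.single 0 v) = Finsupp.single 0 v := by
  rw [ev_single]
  have : (List.ofFn fun i => S i ^ ((0 : Fin r →₀ ℕ) i)).prod = 1 :=
    ofFn_prod_eq_one _ (fun i => by simp)
  rw [this, Module.End.one_apply]

/-! ### Lemmas on `ev` versus the `VP`-operators -/

theorem ev_vT (S : Fin r → Module.End ℂ (BP r R)) (hS : ∀ i, S i ∈ NN r R) (j : Fin r)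
    (F : VP r R) : ev r R S (vT r R j F) = bT r R j (ev r R S F) := by
  induction F using Finsupp.induction_linear with
  | zero => rw [map_zero, ev_zero, map_zero]
  | add f g hf hg =>
    have e1 : vT r R j (f + g) = vT r R j f + vT r R j g := map_add _ _ _
    rw [e1, ev_add, ev_add, map_add, hf, hg]
  | single k v =>
    have h1 : vT r R j (Finsupp.single k v)
        = Finsupp.single k ((X j : MvPolynomial (Fin r) ℂ) • v) := by
      simp [vT, tAct, Finsupp.mapRange_single]
    rw [h1, ev_single, ev_single]
    have h2 : Finsupp.single (0 : (Fin r ⊕ Fin r) →₀ ℕ) ((X j : MvPolynomial (Fin r) ℂ) • v)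
        = bT r R j (Finsupp.single 0 v) := (bT_single r R j 0 v).symm
    rw [h2]
    exact comm_apply r R ((commute_pf r R S (fun i => (comm_of_mem r R (bT_mem r R j)
      (hS i))) (fun i => k i)).symm) _

theorem ev_vLam (S : Fin r → Module.End ℂ (BP r R)) (hS : ∀ i, S i ∈ NN r R) (j : Fin r)
    (F : VP r R) : ev r R S (vLam r R j F) = S j (ev r R S F) := by
  induction F using Finsupp.induction_linear with
  | zero => rw [map_zero, ev_zero, map_zero]
  | add f g hf hg =>
    have e1 : vLam r R j (f + g) = vLam r R j f + vLam r R j g := map_add _ _ _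
    rw [e1, ev_add, ev_add, map_add, hf, hg]
  | single k v =>
    have h1 : vLam r R j (Finsupp.single k v) = Finsupp.single (k + Finsupp.single j 1) v := by
      simp [vLam, Finsupp.mapDomain_single]
    rw [h1, ev_single, ev_single]
    have hc : ∀ i i', Commute (S i) (S i') := fun i i' => comm_of_mem r R (hS i) (hS i')
    have h4 : pf r R S (fun i => (k + Finsupp.single j 1 : Fin r →₀ ℕ) i)
        = pf r R S (fun i => k i) * pf r R S (fun i => (Finsupp.single j 1 : Fin r →₀ ℕ) i) := by
      have h3 : (fun i => (k + Finsupp.single j 1 : Fin r →₀ ℕ) i)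
          = fun i => k i + (Finsupp.single j 1 : Fin r →₀ ℕ) i := rfl
      rw [h3]
      exact pf_add r R S hc _ _
    have h5 : pf r R S (fun i => (Finsupp.single j 1 : Fin r →₀ ℕ) i) = S j := by
      apply pf_single r R S j
      · intro i hi
        rw [Finsupp.single_apply, if_neg (fun hh => hi hh.symm)]
      · simp
    show pf r R S (fun i => (k + Finsupp.single j 1 : Fin r →₀ ℕ) i) (Finsupp.single 0 v)
      = S j (pf r R S (fun i => k i) (Finsupp.single 0 v))
    rw [h4, h5, Module.End.mul_apply]
    exact comm_apply r R (commute_pf r R S (fun i => (comm_of_mem r R (hS j) (hS i))) _).symm _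

theorem ev_vNeg (S : Fin r → Module.End ℂ (BP r R)) (hS : ∀ i, S i ∈ NN r R) (F : VP r R) :
    ev r R S (vNeg r R F) = ev r R (fun i => -(S i) - bT r R i) F := by
  have key : ∀ (j : Fin r) (x : VP r R),
      evHom r R S ((-(vLam r R j) - vT r R j) x) = (-(S j) - bT r R j) (evHom r R S x) := by
    intro j x
    rw [LinearMap.sub_apply, LinearMap.neg_apply, map_sub, map_neg, LinearMap.sub_apply,
      LinearMap.neg_apply, evHom_apply, evHom_apply, evHom_apply, ev_vLam r R S hS,
      ev_vT r R S hS]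
  show evHom r R S (vNeg r R F) = _
  rw [vNeg, map_finsuppSum]
  simp only [ev]
  apply Finsupp.sum_congr
  intro k _
  rw [pf_pull r (Φ := evHom r R S) (fun j => -(vLam r R j) - vT r R j)
    (fun j => -(S j) - bT r R j) key, evHom_apply, ev_single_zero]

/-! ### Bilinearity helpers -/

theorem bz_right {f : R → R → VP r R} (hf : Bilin r R f) (x : R) : f x 0 = 0 := by
  have h := hf.2.2.2 0 x 0
  rw [zero_smul, zero_smul] at h
  exact h

theorem bz_left {f : R → R → VP r R} (hf : Bilin r R f) (x : R) : f 0 x = 0 := by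
  have h := hf.2.2.1 0 0 x
  rw [zero_smul, zero_smul] at h
  exact h

theorem bilin_zsmul_right {f : R → R → VP r R} (hf : Bilin r R f) (n : ℤ) (x v : R) :
    f x (n • v) = n • f x v := by
  rw [← Int.cast_smul_eq_zsmul ℂ n v, hf.2.2.2, Int.cast_smul_eq_zsmul]

theorem bilin_zsmul_left {f : R → R → VP r R} (hf : Bilin r R f) (n : ℤ) (x v : R) :
    f (n • v) x = n • f v x := by
  rw [← Int.cast_smul_eq_zsmul ℂ n v, hf.2.2.1, Int.cast_smul_eq_zsmul]

theorem bilin_neg_right {f : R → R → VP r R} (hf : Bilin r R f) (x v : R) :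
    f x (-v) = -(f x v) := by
  have h := bilin_zsmul_right r R hf (-1) x v
  rw [neg_one_zsmul, neg_one_zsmul] at h
  exact h

theorem bilin_neg_left {f : R → R → VP r R} (hf : Bilin r R f) (x v : R) :
    f (-v) x = -(f v x) := by
  have h := bilin_zsmul_left r R hf (-1) x v
  rw [neg_one_zsmul, neg_one_zsmul] at h
  exact h

/-! ### `bShift` applied pointwise -/

theorem bShift_zero_apply (X : BP r R) : bShift r R 0 X = X := by
  induction X using Finsupp.induction_linear with
  | zero => rw [map_zero]
  | add f g hf hg => rw [map_add, hf, hg]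
  | single e v => rw [bShift_single, add_zero]

theorem bShift_bShift (e e' : (Fin r ⊕ Fin r) →₀ ℕ) (X : BP r R) :
    bShift r R e' (bShift r R e X) = bShift r R (e + e') X := by
  induction X using Finsupp.induction_linear with
  | zero => simp only [map_zero]
  | add f g hf hg => simp only [map_add, hf, hg]
  | single d v => rw [bShift_single, bShift_single, bShift_single, add_assoc]

/-! ### The extended products bundled as linear maps -/

def rHom (f : R → R → VP r R) (hf : Bilin r R f) (S : Fin r → Module.End ℂ (BP r R)) (x : R) :
    BP r R →ₗ[ℂ] BP r R where
  toFun G := evR r R f S x G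
  map_add' G G' := by
    simp only [evR]
    apply Finsupp.sum_add_index'
    · intro e
      rw [bz_right r R hf, ev_zero, map_zero]
    · intro e w w'
      rw [hf.2.1, ev_add, map_add]
  map_smul' z G := by
    simp only [evR, RingHom.id_apply]
    rw [Finsupp.sum_smul_index' (fun e => by rw [bz_right r R hf, ev_zero, map_zero]),
      Finsupp.smul_sum]
    apply Finsupp.sum_congr
    intro e _
    rw [hf.2.2.2]
    rw [show ev r R S (z • f x (G e)) = z • ev r R S (f x (G e)) from
      map_smul (evHom r R S) z _, map_smul]

def lHom (f : R → R → VP r R) (hf : Bilin r R f) (S : Fin r → Module.End ℂ (BP r R)) (z : R) :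
    BP r R →ₗ[ℂ] BP r R where
  toFun F := evL r R f S F z
  map_add' G G' := by
    simp only [evL]
    apply Finsupp.sum_add_index'
    · intro e
      rw [bz_left r R hf, ev_zero, map_zero]
    · intro e w w'
      rw [hf.1, ev_add, map_add]
  map_smul' c G := by
    simp only [evL, RingHom.id_apply]
    rw [Finsupp.sum_smul_index' (fun e => by rw [bz_left r R hf, ev_zero, map_zero]),
      Finsupp.smul_sum]
    apply Finsupp.sum_congr
    intro e _
    rw [hf.2.2.1]
    rw [show ev r R S (c • f (G e) z) = c • ev r R S (f (G e) z) from
      map_smul (evHom r R S) c _, map_smul]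

theorem rHom_apply (f : R → R → VP r R) (hf : Bilin r R f) (S : Fin r → Module.End ℂ (BP r R))
    (x : R) (G : BP r R) : rHom r R f hf S x G = evR r R f S x G := rfl

theorem lHom_apply (f : R → R → VP r R) (hf : Bilin r R f) (S : Fin r → Module.End ℂ (BP r R))
    (z : R) (G : BP r R) : lHom r R f hf S z G = evL r R f S G z := rfl

theorem rHom_single (f : R → R → VP r R) (hf : Bilin r R f)
    (S : Fin r → Module.End ℂ (BP r R)) (x : R) (e : (Fin r ⊕ Fin r) →₀ ℕ) (w : R) :
    rHom r R f hf S x (Finsupp.single e w) = bShift r R e (ev r R S (f x w)) := by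
  show evR r R f S x (Finsupp.single e w) = _
  simp only [evR]
  exact Finsupp.sum_single_index (by rw [bz_right r R hf, ev_zero, map_zero])

theorem lHom_single (f : R → R → VP r R) (hf : Bilin r R f)
    (S : Fin r → Module.End ℂ (BP r R)) (z : R) (e : (Fin r ⊕ Fin r) →₀ ℕ) (w : R) :
    lHom r R f hf S z (Finsupp.single e w) = bShift r R e (ev r R S (f w z)) := by
  show evL r R f S (Finsupp.single e w) z = _
  simp only [evL]
  exact Finsupp.sum_single_index (by rw [bz_left r R hf, ev_zero, map_zero])

/-! ### Commutation of `rHom`/`lHom` with the basic operators -/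

theorem rHom_bShift (f : R → R → VP r R) (hf : Bilin r R f)
    (S : Fin r → Module.End ℂ (BP r R)) (x : R) (e' : (Fin r ⊕ Fin r) →₀ ℕ) (X : BP r R) :
    rHom r R f hf S x (bShift r R e' X) = bShift r R e' (rHom r R f hf S x X) := by
  induction X using Finsupp.induction_linear with
  | zero => simp only [map_zero]
  | add a b ha hb => simp only [map_add, ha, hb]
  | single e v => rw [bShift_single, rHom_single, rHom_single, bShift_bShift]

theorem lHom_bShift (f : R → R → VP r R) (hf : Bilin r R f)
    (S : Fin r → Module.End ℂ (BP r R)) (z : R) (e' : (Fin r ⊕ Fin r) →₀ ℕ) (X : BP r R) :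
    lHom r R f hf S z (bShift r R e' X) = bShift r R e' (lHom r R f hf S z X) := by
  induction X using Finsupp.induction_linear with
  | zero => simp only [map_zero]
  | add a b ha hb => simp only [map_add, ha, hb]
  | single e v => rw [bShift_single, lHom_single, lHom_single, bShift_bShift]

theorem rHom_bT (f : R → R → VP r R) (hf : Bilin r R f) (hsq : Sesq r R f)
    (S : Fin r → Module.End ℂ (BP r R)) (hS : ∀ i, S i ∈ NN r R) (x : R) (j : Fin r)
    (X : BP r R) :
    rHom r R f hf S x (bT r R j X)
      = bT r R j (rHom r R f hf S x X) + S j (rHom r R f hf S x X) := by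
  induction X using Finsupp.induction_linear with
  | zero => simp only [map_zero, add_zero]
  | add a b ha hb =>
    simp only [map_add, ha, hb]
    abel
  | single e v =>
    rw [bT_single, rHom_single, rHom_single, (hsq j x v).2]
    have h1 : (vT r R j + vLam r R j) (f x v) = vT r R j (f x v) + vLam r R j (f x v) :=
      LinearMap.add_apply _ _ _
    rw [h1, ev_add, ev_vT r R S hS, ev_vLam r R S hS, map_add]
    congr 1
    · exact comm_apply r R (comm_of_mem r R (bShift_mem r R e) (bT_mem r R j)) _
    · exact comm_apply r R (comm_of_mem r R (bShift_mem r R e) (hS j)) _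

theorem lHom_bT (f : R → R → VP r R) (hf : Bilin r R f) (hsq : Sesq r R f)
    (S : Fin r → Module.End ℂ (BP r R)) (hS : ∀ i, S i ∈ NN r R) (z : R) (j : Fin r)
    (X : BP r R) :
    lHom r R f hf S z (bT r R j X) = -(S j (lHom r R f hf S z X)) := by
  induction X using Finsupp.induction_linear with
  | zero => simp only [map_zero, neg_zero]
  | add a b ha hb =>
    simp only [map_add, ha, hb]
    abel
  | single e v =>
    rw [bT_single, lHom_single, lHom_single, (hsq j v z).1]
    have h1 : (-(vLam r R j)) (f v z) = -(vLam r R j (f v z)) := rfl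
    rw [h1, ev_neg, ev_vLam r R S hS, map_neg]
    rw [comm_apply r R (comm_of_mem r R (bShift_mem r R e) (hS j)) _]

/-! ### Normal forms -/

/-- `NF h M F = Σ_k M^k (h v_k)`, the normal form of the composite terms. -/
def NF (h : R → BP r R) (M : Fin r → Module.End ℂ (BP r R)) (F : VP r R) : BP r R :=
  F.sum fun k v => (List.ofFn fun i => M i ^ k i).prod (h v)

theorem NF_congr (h h' : R → BP r R) (M : Fin r → Module.End ℂ (BP r R)) (F : VP r R)
    (H : ∀ k, h (F k) = h' (F k)) : NF r R h M F = NF r R h' M F :=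
  Finsupp.sum_congr (fun k _ => by rw [H k])

theorem NF_hadd (h h' : R → BP r R) (M : Fin r → Module.End ℂ (BP r R)) (F : VP r R) :
    NF r R (fun v => h v + h' v) M F = NF r R h M F + NF r R h' M F := by
  simp only [NF]
  rw [← Finsupp.sum_add]
  apply Finsupp.sum_congr
  intro k _
  rw [map_add]

theorem NF_hzsmul (h : R → BP r R) (M : Fin r → Module.End ℂ (BP r R)) (F : VP r R) (n : ℤ) :
    NF r R (fun v => n • h v) M F = n • NF r R h M F := by
  simp only [NF]
  rw [Finsupp.smul_sum]
  apply Finsupp.sum_congr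
  intro k _
  rw [map_zsmul]

theorem NF_hneg (h : R → BP r R) (M : Fin r → Module.End ℂ (BP r R)) (F : VP r R) :
    NF r R (fun v => -(h v)) M F = -(NF r R h M F) := by
  have := NF_hzsmul r R h M F (-1)
  rw [neg_one_zsmul] at this
  rw [← this]
  apply NF_congr
  intro k
  rw [neg_one_zsmul]

theorem map_NF (Φ : BP r R →ₗ[ℂ] BP r R) (h : R → BP r R)
    (M M' : Fin r → Module.End ℂ (BP r R)) (hint : ∀ i X, Φ (M i X) = M' i (Φ X))
    (F : VP r R) : Φ (NF r R h M F) = NF r R (fun v => Φ (h v)) M' F := by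
  rw [NF, map_finsuppSum, NF]
  apply Finsupp.sum_congr
  intro k _
  rw [pf_pull r Φ M M' hint]

/-- The normal form bundled as a linear map in `F`. -/
def nfHom (h : R → BP r R) (hadd : ∀ v w, h (v + w) = h v + h w)
    (hsmul : ∀ (z : ℂ) v, h (z • v) = z • h v) (M : Fin r → Module.End ℂ (BP r R)) :
    VP r R →ₗ[ℂ] BP r R where
  toFun F := NF r R h M F
  map_add' F G := by
    have h0 : h 0 = 0 := by
      have := hsmul 0 0
      rw [zero_smul, zero_smul] at this
      exact this
    simp only [NF]
    apply Finsupp.sum_add_index'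
    · intro k
      rw [h0, map_zero]
    · intro k v w
      rw [hadd, map_add]
  map_smul' z F := by
    have h0 : h 0 = 0 := by
      have := hsmul 0 0
      rw [zero_smul, zero_smul] at this
      exact this
    simp only [NF, RingHom.id_apply]
    rw [Finsupp.sum_smul_index' (fun k => by rw [h0, map_zero]), Finsupp.smul_sum]
    apply Finsupp.sum_congr
    intro k _
    rw [hsmul, map_smul]

theorem nfHom_apply (h : R → BP r R) (hadd : ∀ v w, h (v + w) = h v + h w)
    (hsmul : ∀ (z : ℂ) v, h (z • v) = z • h v) (M : Fin r → Module.End ℂ (BP r R))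
    (F : VP r R) : nfHom r R h hadd hsmul M F = NF r R h M F := rfl

theorem NF_single (h : R → BP r R) (h0 : h 0 = 0) (M : Fin r → Module.End ℂ (BP r R))
    (k : Fin r →₀ ℕ) (v : R) :
    NF r R h M (Finsupp.single k v) = (List.ofFn fun i => M i ^ k i).prod (h v) := by
  simp only [NF]
  exact Finsupp.sum_single_index (by rw [h0, map_zero])

theorem NF_Fzsmul (h : R → BP r R) (hadd : ∀ v w, h (v + w) = h v + h w)
    (hsmul : ∀ (z : ℂ) v, h (z • v) = z • h v) (M : Fin r → Module.End ℂ (BP r R)) (n : ℤ)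
    (F : VP r R) : NF r R h M (n • F) = n • NF r R h M F :=
  map_zsmul (nfHom r R h hadd hsmul M) n F

theorem NF_Fneg (h : R → BP r R) (hadd : ∀ v w, h (v + w) = h v + h w)
    (hsmul : ∀ (z : ℂ) v, h (z • v) = z • h v) (M : Fin r → Module.End ℂ (BP r R))
    (F : VP r R) : NF r R h M (-F) = -(NF r R h M F) :=
  map_neg (nfHom r R h hadd hsmul M) F

theorem NF_vLam (h : R → BP r R) (hadd : ∀ v w, h (v + w) = h v + h w)
    (hsmul : ∀ (z : ℂ) v, h (z • v) = z • h v) (M : Fin r → Module.End ℂ (BP r R))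
    (hM : ∀ i, M i ∈ NN r R) (j : Fin r) (F : VP r R) :
    NF r R h M (vLam r R j F) = M j (NF r R h M F) := by
  have h0 : h 0 = 0 := by
    have := hsmul 0 0
    rw [zero_smul, zero_smul] at this
    exact this
  induction F using Finsupp.induction_linear with
  | zero => rw [map_zero, ← nfHom_apply r R h hadd hsmul, map_zero, map_zero]
  | add a b ha hb =>
    have e1 : vLam r R j (a + b) = vLam r R j a + vLam r R j b := map_add _ _ _
    have e2 : ∀ (x y : VP r R), NF r R h M (x + y) = NF r R h M x + NF r R h M y :=
      fun x y => map_add (nfHom r R h hadd hsmul M) x y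
    rw [e1, e2, e2, map_add, ha, hb]
  | single k v =>
    have h1 : vLam r R j (Finsupp.single k v) = Finsupp.single (k + Finsupp.single j 1) v := by
      simp [vLam, Finsupp.mapDomain_single]
    rw [h1, NF_single r R h h0, NF_single r R h h0]
    have hc : ∀ i i', Commute (M i) (M i') := fun i i' => comm_of_mem r R (hM i) (hM i')
    have h4 : pf r R M (fun i => (k + Finsupp.single j 1 : Fin r →₀ ℕ) i)
        = pf r R M (fun i => k i) * pf r R M (fun i => (Finsupp.single j 1 : Fin r →₀ ℕ) i) :=
      pf_add r R M hc _ _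
    have h5 : pf r R M (fun i => (Finsupp.single j 1 : Fin r →₀ ℕ) i) = M j := by
      apply pf_single r R M j
      · intro i hi
        rw [Finsupp.single_apply, if_neg (fun hh => hi hh.symm)]
      · simp
    show pf r R M (fun i => (k + Finsupp.single j 1 : Fin r →₀ ℕ) i) (h v)
      = M j (pf r R M (fun i => k i) (h v))
    rw [h4, h5, Module.End.mul_apply]
    exact comm_apply r R (commute_pf r R M (fun i => (comm_of_mem r R (hM j) (hM i))) _).symm _

theorem NF_vT (h : R → BP r R) (hadd : ∀ v w, h (v + w) = h v + h w)
    (hsmul : ∀ (z : ℂ) v, h (z • v) = z • h v) (M : Fin r → Module.End ℂ (BP r R))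
    (hM : ∀ i, M i ∈ NN r R) (τ : Fin r → Module.End ℂ (BP r R)) (hτ : ∀ i, τ i ∈ NN r R)
    (hhT : ∀ (j : Fin r) v, h ((X j : MvPolynomial (Fin r) ℂ) • v) = τ j (h v)) (j : Fin r)
    (F : VP r R) : NF r R h M (vT r R j F) = τ j (NF r R h M F) := by
  have h0 : h 0 = 0 := by
    have := hsmul 0 0
    rw [zero_smul, zero_smul] at this
    exact this
  induction F using Finsupp.induction_linear with
  | zero => rw [map_zero, ← nfHom_apply r R h hadd hsmul, map_zero, map_zero]
  | add a b ha hb =>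
    have e1 : vT r R j (a + b) = vT r R j a + vT r R j b := map_add _ _ _
    have e2 : ∀ (x y : VP r R), NF r R h M (x + y) = NF r R h M x + NF r R h M y :=
      fun x y => map_add (nfHom r R h hadd hsmul M) x y
    rw [e1, e2, e2, map_add, ha, hb]
  | single k v =>
    have h1 : vT r R j (Finsupp.single k v)
        = Finsupp.single k ((X j : MvPolynomial (Fin r) ℂ) • v) := by
      simp [vT, tAct, Finsupp.mapRange_single]
    rw [h1, NF_single r R h h0, NF_single r R h h0, hhT j v]
    exact comm_apply r R (commute_pf r R M
      (fun i => comm_of_mem r R (hτ j) (hM i)) (fun i => k i)).symm _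

theorem NF_vNeg (h : R → BP r R) (hadd : ∀ v w, h (v + w) = h v + h w)
    (hsmul : ∀ (z : ℂ) v, h (z • v) = z • h v) (M : Fin r → Module.End ℂ (BP r R))
    (hM : ∀ i, M i ∈ NN r R) (τ : Fin r → Module.End ℂ (BP r R)) (hτ : ∀ i, τ i ∈ NN r R)
    (hhT : ∀ (j : Fin r) v, h ((X j : MvPolynomial (Fin r) ℂ) • v) = τ j (h v))
    (F : VP r R) : NF r R h M (vNeg r R F) = NF r R h (fun i => -(M i) - τ i) F := by
  have h0 : h 0 = 0 := by
    have := hsmul 0 0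
    rw [zero_smul, zero_smul] at this
    exact this
  have key : ∀ (j : Fin r) (x : VP r R),
      nfHom r R h hadd hsmul M ((-(vLam r R j) - vT r R j) x)
        = (-(M j) - τ j) (nfHom r R h hadd hsmul M x) := by
    intro j x
    rw [LinearMap.sub_apply, LinearMap.neg_apply, map_sub, map_neg, LinearMap.sub_apply,
      LinearMap.neg_apply, nfHom_apply, nfHom_apply, nfHom_apply,
      NF_vLam r R h hadd hsmul M hM, NF_vT r R h hadd hsmul M hM τ hτ hhT]
  show nfHom r R h hadd hsmul M (vNeg r R F) = _
  rw [vNeg, map_finsuppSum]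
  simp only [NF]
  apply Finsupp.sum_congr
  intro k _
  rw [pf_pull r (Φ := nfHom r R h hadd hsmul M) (fun j => -(vLam r R j) - vT r R j)
    (fun j => -(M j) - τ j) key, nfHom_apply, NF_single r R h h0]
  have : (List.ofFn fun i => M i ^ ((0 : Fin r →₀ ℕ) i)).prod = 1 :=
    ofFn_prod_eq_one _ (fun i => by simp)
  rw [this, Module.End.one_apply]

/-! ### Reduction of the composite terms to normal form -/

theorem red_R (f : R → R → VP r R) (hf : Bilin r R f) (S : Fin r → Module.End ℂ (BP r R))
    (x : R) (M M' : Fin r → Module.End ℂ (BP r R))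
    (hint : ∀ (i : Fin r) (X : BP r R),
      rHom r R f hf S x (M i X) = M' i (rHom r R f hf S x X)) (F : VP r R) :
    evR r R f S x (ev r R M F) = NF r R (fun v => ev r R S (f x v)) M' F := by
  show rHom r R f hf S x (ev r R M F) = _
  conv_lhs => rw [ev]
  rw [map_finsuppSum, NF]
  apply Finsupp.sum_congr
  intro k _
  rw [pf_pull r (Φ := rHom r R f hf S x) M M' hint, rHom_single, bShift_zero_apply]

theorem red_L (f : R → R → VP r R) (hf : Bilin r R f) (S : Fin r → Module.End ℂ (BP r R))
    (z : R) (M M' : Fin r → Module.End ℂ (BP r R))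
    (hint : ∀ (i : Fin r) (X : BP r R),
      lHom r R f hf S z (M i X) = M' i (lHom r R f hf S z X)) (F : VP r R) :
    evL r R f S (ev r R M F) z = NF r R (fun v => ev r R S (f v z)) M' F := by
  show lHom r R f hf S z (ev r R M F) = _
  conv_lhs => rw [ev]
  rw [map_finsuppSum, NF]
  apply Finsupp.sum_congr
  intro k _
  rw [pf_pull r (Φ := lHom r R f hf S z) M M' hint, lHom_single, bShift_zero_apply]

/-! ### The substitution operator -/

def sPP (L M : Fin r → Module.End ℂ (BP r R)) (e : (Fin r ⊕ Fin r) →₀ ℕ) :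
    Module.End ℂ (BP r R) :=
  pf r R L (fun i => e (Sum.inl i)) * pf r R M (fun i => e (Sum.inr i))

theorem sPP_zero (L M : Fin r → Module.End ℂ (BP r R)) : sPP r R L M 0 = 1 := by
  rw [sPP, pf_one r R L (fun i => (0 : (Fin r ⊕ Fin r) →₀ ℕ) (Sum.inl i)) (fun i => rfl),
    pf_one r R M (fun i => (0 : (Fin r ⊕ Fin r) →₀ ℕ) (Sum.inr i)) (fun i => rfl), one_mul]

theorem commute_sPP_left {g : Module.End ℂ (BP r R)} (L M : Fin r → Module.End ℂ (BP r R))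
    (hgL : ∀ i, Commute g (L i)) (hgM : ∀ i, Commute g (M i)) (e : (Fin r ⊕ Fin r) →₀ ℕ) :
    Commute g (sPP r R L M e) :=
  (commute_pf r R L hgL _).mul_right (commute_pf r R M hgM _)

theorem sPP_add (L M : Fin r → Module.End ℂ (BP r R)) (hL : ∀ i, L i ∈ NN r R)
    (hM : ∀ i, M i ∈ NN r R) (e e' : (Fin r ⊕ Fin r) →₀ ℕ) :
    sPP r R L M (e + e') = sPP r R L M e * sPP r R L M e' := by
  have hcl : ∀ i j, Commute (L i) (L j) := fun i j => comm_of_mem r R (hL i) (hL j)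
  have hcm : ∀ i j, Commute (M i) (M j) := fun i j => comm_of_mem r R (hM i) (hM j)
  have h1 : pf r R L (fun i => (e + e' : (Fin r ⊕ Fin r) →₀ ℕ) (Sum.inl i))
      = pf r R L (fun i => e (Sum.inl i)) * pf r R L (fun i => e' (Sum.inl i)) :=
    pf_add r R L hcl _ _
  have h2 : pf r R M (fun i => (e + e' : (Fin r ⊕ Fin r) →₀ ℕ) (Sum.inr i))
      = pf r R M (fun i => e (Sum.inr i)) * pf r R M (fun i => e' (Sum.inr i)) :=
    pf_add r R M hcm _ _
  rw [sPP, h1, h2, sPP, sPP]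
  have hcom : Commute (pf r R L (fun i => e' (Sum.inl i))) (pf r R M (fun i => e (Sum.inr i))) :=
    commute_pf r R M (fun i => (commute_pf r R L
      (fun j => comm_of_mem r R (hM i) (hL j)) _).symm) _
  exact hcom.mul_mul_mul_comm _ _

def subHom (L M : Fin r → Module.End ℂ (BP r R)) : BP r R →ₗ[ℂ] BP r R where
  toFun F := F.sum fun e v => sPP r R L M e (Finsupp.single 0 v)
  map_add' F G := by
    apply Finsupp.sum_add_index'
    · intro e
      rw [Finsupp.single_zero, map_zero]
    · intro e v w
      rw [Finsupp.single_add, map_add]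
  map_smul' z F := by
    simp only [RingHom.id_apply]
    rw [Finsupp.sum_smul_index' (fun e => by rw [Finsupp.single_zero, map_zero]),
      Finsupp.smul_sum]
    apply Finsupp.sum_congr
    intro e _
    rw [← Finsupp.smul_single, map_smul]

theorem subHom_single (L M : Fin r → Module.End ℂ (BP r R)) (e : (Fin r ⊕ Fin r) →₀ ℕ)
    (v : R) : subHom r R L M (Finsupp.single e v) = sPP r R L M e (Finsupp.single 0 v) := by
  have h1 : (Finsupp.single e v : BP r R).sum
      (fun e v => sPP r R L M e (Finsupp.single 0 v)) = sPP r R L M e (Finsupp.single 0 v) :=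
    Finsupp.sum_single_index (by rw [Finsupp.single_zero, map_zero])
  exact h1

theorem subHom_single_zero (L M : Fin r → Module.End ℂ (BP r R)) (v : R) :
    subHom r R L M (Finsupp.single 0 v) = Finsupp.single 0 v := by
  rw [subHom_single, sPP_zero, Module.End.one_apply]

theorem subHom_bShift (L M : Fin r → Module.End ℂ (BP r R)) (hL : ∀ i, L i ∈ NN r R)
    (hM : ∀ i, M i ∈ NN r R) (δ : (Fin r ⊕ Fin r) →₀ ℕ) (X : BP r R) :
    subHom r R L M (bShift r R δ X) = sPP r R L M δ (subHom r R L M X) := by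
  induction X using Finsupp.induction_linear with
  | zero => simp only [map_zero]
  | add a b ha hb => simp only [map_add, ha, hb]
  | single e v =>
    rw [bShift_single, subHom_single, subHom_single, sPP_add r R L M hL hM, Module.End.mul_apply]
    have hcom : Commute (sPP r R L M δ) (sPP r R L M e) := by
      apply commute_sPP_left r R L M
      · intro i
        exact (commute_sPP_left r R L M
          (fun j => comm_of_mem r R (hL i) (hL j))
          (fun j => comm_of_mem r R (hL i) (hM j)) δ).symm
      · intro i
        exact (commute_sPP_left r R L M
          (fun j => comm_of_mem r R (hM i) (hL j))
          (fun j => comm_of_mem r R (hM i) (hM j)) δ).symm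
    exact (comm_apply r R hcom _).symm

theorem subHom_bLam (L M : Fin r → Module.End ℂ (BP r R)) (hL : ∀ i, L i ∈ NN r R)
    (hM : ∀ i, M i ∈ NN r R) (j : Fin r) (X : BP r R) :
    subHom r R L M (bLam r R j X) = L j (subHom r R L M X) := by
  have h1 : sPP r R L M (Finsupp.single (Sum.inl j) 1) = L j := by
    rw [sPP]
    have h2 : pf r R L
        (fun i => (Finsupp.single (Sum.inl j) 1 : (Fin r ⊕ Fin r) →₀ ℕ) (Sum.inl i)) = L j := by
      apply pf_single r R L j
      · intro i hi
        rw [Finsupp.single_apply, if_neg (fun hh => hi (Sum.inl_injective hh).symm)]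
      · simp
    have h3 : pf r R M
        (fun i => (Finsupp.single (Sum.inl j) 1 : (Fin r ⊕ Fin r) →₀ ℕ) (Sum.inr i)) = 1 := by
      apply pf_one
      intro i
      rw [Finsupp.single_apply, if_neg (by simp)]
    rw [h2, h3, mul_one]
  have := subHom_bShift r R L M hL hM (Finsupp.single (Sum.inl j) 1) X
  rw [h1] at this
  exact this

theorem subHom_bMu (L M : Fin r → Module.End ℂ (BP r R)) (hL : ∀ i, L i ∈ NN r R)
    (hM : ∀ i, M i ∈ NN r R) (j : Fin r) (X : BP r R) :
    subHom r R L M (bMu r R j X) = M j (subHom r R L M X) := by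
  have h1 : sPP r R L M (Finsupp.single (Sum.inr j) 1) = M j := by
    rw [sPP]
    have h2 : pf r R L
        (fun i => (Finsupp.single (Sum.inr j) 1 : (Fin r ⊕ Fin r) →₀ ℕ) (Sum.inl i)) = 1 := by
      apply pf_one
      intro i
      rw [Finsupp.single_apply, if_neg (by simp)]
    have h3 : pf r R M
        (fun i => (Finsupp.single (Sum.inr j) 1 : (Fin r ⊕ Fin r) →₀ ℕ) (Sum.inr i)) = M j := by
      apply pf_single r R M j
      · intro i hi
        rw [Finsupp.single_apply, if_neg (fun hh => hi (Sum.inr_injective hh).symm)]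
      · simp
    rw [h2, h3, one_mul]
  have := subHom_bShift r R L M hL hM (Finsupp.single (Sum.inr j) 1) X
  rw [h1] at this
  exact this

theorem subHom_bT (L M : Fin r → Module.End ℂ (BP r R)) (hL : ∀ i, L i ∈ NN r R)
    (hM : ∀ i, M i ∈ NN r R) (j : Fin r) (X : BP r R) :
    subHom r R L M (bT r R j X) = bT r R j (subHom r R L M X) := by
  induction X using Finsupp.induction_linear with
  | zero => simp only [map_zero]
  | add a b ha hb => simp only [map_add, ha, hb]
  | single e v =>
    rw [bT_single, subHom_single, subHom_single, ← bT_single]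
    exact comm_apply r R (commute_sPP_left r R L M
      (fun i => comm_of_mem r R (bT_mem r R j) (hL i))
      (fun i => comm_of_mem r R (bT_mem r R j) (hM i)) e).symm _

theorem subHom_ev (L M S S' : Fin r → Module.End ℂ (BP r R))
    (hint : ∀ (i : Fin r) (X : BP r R),
      subHom r R L M (S i X) = S' i (subHom r R L M X)) (F : VP r R) :
    subHom r R L M (ev r R S F) = ev r R S' F := by
  simp only [ev]
  rw [map_finsuppSum]
  apply Finsupp.sum_congr
  intro k _
  rw [pf_pull r (Φ := subHom r R L M) S S' hint, subHom_single_zero]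

/-! ### Assorted helper lemmas for the main proof -/

theorem evR_zero (f : R → R → VP r R) (hf : Bilin r R f) (S : Fin r → Module.End ℂ (BP r R))
    (x : R) : evR r R f S x (0 : BP r R) = 0 := map_zero (rHom r R f hf S x)

theorem evR_add (f : R → R → VP r R) (hf : Bilin r R f) (S : Fin r → Module.End ℂ (BP r R))
    (x : R) (X Y : BP r R) : evR r R f S x (X + Y) = evR r R f S x X + evR r R f S x Y :=
  map_add (rHom r R f hf S x) X Y

theorem evR_zsmul (f : R → R → VP r R) (hf : Bilin r R f) (S : Fin r → Module.End ℂ (BP r R))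
    (x : R) (n : ℤ) (X : BP r R) : evR r R f S x (n • X) = n • evR r R f S x X :=
  map_zsmul (rHom r R f hf S x) n X

theorem evL_add₁ (f : R → R → VP r R) (hf : Bilin r R f) (S : Fin r → Module.End ℂ (BP r R))
    (z : R) (X Y : BP r R) : evL r R f S (X + Y) z = evL r R f S X z + evL r R f S Y z :=
  map_add (lHom r R f hf S z) X Y

theorem evL_zsmul₁ (f : R → R → VP r R) (hf : Bilin r R f) (S : Fin r → Module.End ℂ (BP r R))
    (z : R) (n : ℤ) (X : BP r R) : evL r R f S (n • X) z = n • evL r R f S X z :=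
  map_zsmul (lHom r R f hf S z) n X

theorem evL_add₂ (f : R → R → VP r R) (hf : Bilin r R f) (S : Fin r → Module.End ℂ (BP r R))
    (F : BP r R) (c c' : R) :
    evL r R f S F (c + c') = evL r R f S F c + evL r R f S F c' := by
  simp only [evL]
  rw [← Finsupp.sum_add]
  apply Finsupp.sum_congr
  intro e _
  rw [hf.2.1, ev_add, map_add]

theorem evL_zero₂ (f : R → R → VP r R) (hf : Bilin r R f) (S : Fin r → Module.End ℂ (BP r R))
    (F : BP r R) : evL r R f S F 0 = 0 := by
  simp only [evL]
  have h1 : F.sum (fun e w => bShift r R e (ev r R S (f w (0 : R))))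
      = F.sum (fun _ _ => (0 : BP r R)) :=
    Finsupp.sum_congr (fun e _ => by rw [bz_right r R hf, ev_zero, map_zero])
  rw [h1, Finsupp.sum, Finset.sum_const_zero]

/-! ### Hint lemmas: commutation of the extension operators with the families -/

theorem hint_r_mu (f : R → R → VP r R) (hf : Bilin r R f) (S : Fin r → Module.End ℂ (BP r R))
    (x : R) : ∀ (i : Fin r) (X : BP r R),
    rHom r R f hf S x ((FM r R i) X) = (FM r R i) (rHom r R f hf S x X) :=
  fun i X => rHom_bShift r R f hf S x (Finsupp.single (Sum.inr i) 1) X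

theorem hint_r_lam (f : R → R → VP r R) (hf : Bilin r R f) (S : Fin r → Module.End ℂ (BP r R))
    (x : R) : ∀ (i : Fin r) (X : BP r R),
    rHom r R f hf S x ((FL r R i) X) = (FL r R i) (rHom r R f hf S x X) :=
  fun i X => rHom_bShift r R f hf S x (Finsupp.single (Sum.inl i) 1) X

theorem hint_l_lam (f : R → R → VP r R) (hf : Bilin r R f) (S : Fin r → Module.End ℂ (BP r R))
    (z : R) : ∀ (i : Fin r) (X : BP r R),
    lHom r R f hf S z ((FL r R i) X) = (FL r R i) (lHom r R f hf S z X) :=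
  fun i X => lHom_bShift r R f hf S z (Finsupp.single (Sum.inl i) 1) X

theorem hint_l_fnl (f : R → R → VP r R) (hf : Bilin r R f) (hsq : Sesq r R f) (z : R) :
    ∀ (i : Fin r) (X : BP r R),
    lHom r R f hf (FLM r R) z ((FNL r R i) X) = (FM r R i) (lHom r R f hf (FLM r R) z X) := by
  intro i X
  have e1 : (FNL r R i) X = -(bLam r R i X) - bT r R i X := rfl
  rw [e1, map_sub, map_neg,
    lHom_bT r R f hf hsq (FLM r R) (FLM_mem r R) z i X]
  have e2 : lHom r R f hf (FLM r R) z (bLam r R i X)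
      = bLam r R i (lHom r R f hf (FLM r R) z X) :=
    lHom_bShift r R f hf (FLM r R) z (Finsupp.single (Sum.inl i) 1) X
  rw [e2]
  set Y := lHom r R f hf (FLM r R) z X
  show -(bLam r R i Y) - -((FLM r R i) Y) = (FM r R i) Y
  have e4 : (FLM r R i) Y = bLam r R i Y + bMu r R i Y := rfl
  rw [e4]
  show _ = bMu r R i Y
  abel

theorem hint_r_fnl (f : R → R → VP r R) (hf : Bilin r R f) (hsq : Sesq r R f) (x : R) :
    ∀ (i : Fin r) (X : BP r R),
    rHom r R f hf (FM r R) x ((FNL r R i) X) = (FNLM r R i) (rHom r R f hf (FM r R) x X) := by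
  intro i X
  have e1 : (FNL r R i) X = -(bLam r R i X) - bT r R i X := rfl
  rw [e1, map_sub, map_neg,
    rHom_bT r R f hf hsq (FM r R) (FM_mem r R) x i X]
  have e2 : rHom r R f hf (FM r R) x (bLam r R i X)
      = bLam r R i (rHom r R f hf (FM r R) x X) :=
    rHom_bShift r R f hf (FM r R) x (Finsupp.single (Sum.inl i) 1) X
  rw [e2]
  set Y := rHom r R f hf (FM r R) x X
  show -(bLam r R i Y) - (bT r R i Y + (FM r R i) Y) = (FNLM r R i) Y
  have e4 : (FNLM r R i) Y = -(bLam r R i Y) - bMu r R i Y - bT r R i Y := by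
    show (-(bLam r R i) - bMu r R i - bT r R i) Y = _
    simp only [LinearMap.sub_apply, LinearMap.neg_apply]
  have e5 : (FM r R i) Y = bMu r R i Y := rfl
  rw [e4, e5]
  abel

/-! ### The substitution `λ ↦ μ`, `μ ↦ -λ-μ-T` -/

theorem sub_FL : ∀ (i : Fin r) (X : BP r R),
    subHom r R (FM r R) (FNLM r R) ((FL r R i) X)
      = (FM r R i) (subHom r R (FM r R) (FNLM r R) X) :=
  fun i X => subHom_bLam r R (FM r R) (FNLM r R) (FM_mem r R) (FNLM_mem r R) i X

theorem sub_FM : ∀ (i : Fin r) (X : BP r R),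
    subHom r R (FM r R) (FNLM r R) ((FM r R i) X)
      = (FNLM r R i) (subHom r R (FM r R) (FNLM r R) X) :=
  fun i X => subHom_bMu r R (FM r R) (FNLM r R) (FM_mem r R) (FNLM_mem r R) i X

theorem sub_FLM : ∀ (i : Fin r) (X : BP r R),
    subHom r R (FM r R) (FNLM r R) ((FLM r R i) X)
      = (FNL r R i) (subHom r R (FM r R) (FNLM r R) X) := by
  intro i X
  have e1 : (FLM r R i) X = bLam r R i X + bMu r R i X := rfl
  rw [e1, map_add, subHom_bLam r R (FM r R) (FNLM r R) (FM_mem r R) (FNLM_mem r R) i X,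
    subHom_bMu r R (FM r R) (FNLM r R) (FM_mem r R) (FNLM_mem r R) i X]
  set Y := subHom r R (FM r R) (FNLM r R) X
  show bMu r R i Y + (FNLM r R i) Y = (FNL r R i) Y
  have e2 : (FNLM r R i) Y = -(bLam r R i Y) - bMu r R i Y - bT r R i Y := by
    show (-(bLam r R i) - bMu r R i - bT r R i) Y = _
    simp only [LinearMap.sub_apply, LinearMap.neg_apply]
  have e3 : (FNL r R i) Y = -(bLam r R i Y) - bT r R i Y := by
    show (-(bLam r R i) - bT r R i) Y = _
    simp only [LinearMap.sub_apply, LinearMap.neg_apply]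
  rw [e2, e3]
  abel

theorem subev_FL (F : VP r R) :
    subHom r R (FM r R) (FNLM r R) (ev r R (FL r R) F) = ev r R (FM r R) F :=
  subHom_ev r R (FM r R) (FNLM r R) (FL r R) (FM r R) (sub_FL r R) F

theorem subev_FM (F : VP r R) :
    subHom r R (FM r R) (FNLM r R) (ev r R (FM r R) F) = ev r R (FNLM r R) F :=
  subHom_ev r R (FM r R) (FNLM r R) (FM r R) (FNLM r R) (sub_FM r R) F

theorem subev_FLM (F : VP r R) :
    subHom r R (FM r R) (FNLM r R) (ev r R (FLM r R) F) = ev r R (FNL r R) F :=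
  subHom_ev r R (FM r R) (FNLM r R) (FLM r R) (FNL r R) (sub_FLM r R) F

/-! ### `h`-data helpers -/

theorem hadd_R (f : R → R → VP r R) (hf : Bilin r R f) (S : Fin r → Module.End ℂ (BP r R))
    (x : R) : ∀ v w, ev r R S (f x (v + w)) = ev r R S (f x v) + ev r R S (f x w) :=
  fun v w => by rw [hf.2.1, ev_add]

theorem hsmul_R (f : R → R → VP r R) (hf : Bilin r R f) (S : Fin r → Module.End ℂ (BP r R))
    (x : R) : ∀ (z : ℂ) v, ev r R S (f x (z • v)) = z • ev r R S (f x v) :=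
  fun z v => by rw [hf.2.2.2]; exact map_smul (evHom r R S) z _

theorem hadd_L (f : R → R → VP r R) (hf : Bilin r R f) (S : Fin r → Module.End ℂ (BP r R))
    (z : R) : ∀ v w, ev r R S (f (v + w) z) = ev r R S (f v z) + ev r R S (f w z) :=
  fun v w => by rw [hf.1, ev_add]

theorem hsmul_L (f : R → R → VP r R) (hf : Bilin r R f) (S : Fin r → Module.End ℂ (BP r R))
    (z : R) : ∀ (c : ℂ) v, ev r R S (f (c • v) z) = c • ev r R S (f v z) :=
  fun c v => by rw [hf.2.2.1]; exact map_smul (evHom r R S) c _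

theorem hT_R (f : R → R → VP r R) (hsq : Sesq r R f) (S : Fin r → Module.End ℂ (BP r R))
    (hS : ∀ i, S i ∈ NN r R) (x : R) : ∀ (j : Fin r) v,
    ev r R S (f x ((X j : MvPolynomial (Fin r) ℂ) • v))
      = (bT r R j + S j) (ev r R S (f x v)) := by
  intro j v
  rw [(hsq j x v).2]
  have h1 : (vT r R j + vLam r R j) (f x v) = vT r R j (f x v) + vLam r R j (f x v) := rfl
  rw [h1, ev_add, ev_vT r R S hS, ev_vLam r R S hS]
  rfl

theorem hT_L (f : R → R → VP r R) (hsq : Sesq r R f) (S : Fin r → Module.End ℂ (BP r R))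
    (hS : ∀ i, S i ∈ NN r R) (z : R) : ∀ (j : Fin r) v,
    ev r R S (f ((X j : MvPolynomial (Fin r) ℂ) • v) z)
      = (-(S j)) (ev r R S (f v z)) := by
  intro j v
  rw [(hsq j v z).1]
  have h1 : (-(vLam r R j)) (f v z) = -(vLam r R j (f v z)) := rfl
  rw [h1, ev_neg, ev_vLam r R S hS]
  rfl

/-! ### Sign lemmas -/

theorem sgn_cases (α β : ZMod 2) : sgn α β = 1 ∨ sgn α β = -1 := by
  unfold sgn
  rcases Nat.even_or_odd (α.val * β.val) with h | h
  · left; exact h.neg_one_pow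
  · right; exact h.neg_one_pow

theorem sgn_comm (α β : ZMod 2) : sgn α β = sgn β α := by
  unfold sgn; rw [Nat.mul_comm]

theorem sgn_add_right (α β γ : ZMod 2) : sgn α (β + γ) = sgn α β * sgn α γ := by revert α β γ; decide

theorem sgn_add_left (α β γ : ZMod 2) : sgn (α + β) γ = sgn α γ * sgn β γ := by revert α β γ; decide

end

end S17

/-- Let `R` carry both an `r`-dimensional right Novikov conformal
superalgebra `λ`-product `∘_λ` (denoted `p`) and an `r`-dimensional Lie conformal
superalgebra `λ`-bracket (denoted `q`) satisfying the compatibility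
`[a_λ (b ∘_μ c)] + a ∘_λ [b_μ c] − [a_λ b] ∘_{λ+μ} c
  − (−1)^{αβ}([b_μ (a ∘_λ c)] + b ∘_μ [a_λ c]) = 0`.
With `a ∗_λ b = a ∘_λ b + (−1)^{αβ} b ∘_{−λ−T} a` one has
`[a_λ (b ∘_μ c)] + a ∗_λ [b_μ c] + [(a ∘_λ b)_{λ+μ} c] − [(a ∗_λ b)_{λ+μ} c]
  − [a_λ b] ∗_{λ+μ} c − (−1)^{αβ} [b_μ (a ∗_λ c)] = 0`. -/
theorem statement_17 (r : ℕ) (R : Type*) [AddCommGroup R] [Module ℂ R]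
    [Module (MvPolynomial (Fin r) ℂ) R] [IsScalarTower ℂ (MvPolynomial (Fin r) ℂ) R]
    (G : ZMod 2 → Submodule ℂ R) (hG : IsGraded r R G)
    (p : R → R → VP r R) (hp : IsNovRight r R G p)
    (q : R → R → VP r R) (hq : IsLieConfSuper r R G q)
    (hcompat : ∀ (α β : ZMod 2) (a b : R), a ∈ G α → b ∈ G β → ∀ c : R,
      evR r R q (FL r R) a (ev r R (FM r R) (p b c)) +
      evR r R p (FL r R) a (ev r R (FM r R) (q b c)) -
      evL r R p (FLM r R) (ev r R (FL r R) (q a b)) c -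
      sgn α β • (evR r R q (FM r R) b (ev r R (FL r R) (p a c)) +
        evR r R p (FM r R) b (ev r R (FL r R) (q a c))) = 0)
    (s : R → R → VP r R) (hs : Bilin r R s)
    (hdef : ∀ (α β : ZMod 2) (a b : R), a ∈ G α → b ∈ G β →
      s a b = p a b + sgn α β • vNeg r R (p b a)) :
    ∀ (α β : ZMod 2) (a b : R), a ∈ G α → b ∈ G β → ∀ c : R,
      evR r R q (FL r R) a (ev r R (FM r R) (p b c)) +
      evR r R s (FL r R) a (ev r R (FM r R) (q b c)) +
      evL r R q (FLM r R) (ev r R (FL r R) (p a b)) c -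
      evL r R q (FLM r R) (ev r R (FL r R) (s a b)) c -
      evL r R s (FLM r R) (ev r R (FL r R) (q a b)) c -
      sgn α β • evR r R q (FM r R) b (ev r R (FL r R) (s a c)) = 0 := by
  intro α β a b ha hb c
  open S17 in
  have hqB : Bilin r R q := hq.1
  have hpB : Bilin r R p := hp.1
  have hqS : Sesq r R q := hq.2.2.1
  have hpS : Sesq r R p := hp.2.2.1
  have hqP : ParityPres r R G q := hq.2.1
  have hpP : ParityPres r R G p := hp.2.1
  have hskew : Skew r R G q := hq.2.2.2.1
  have hcTop : c ∈ ⨆ δ : ZMod 2, G δ := by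
    rw [hG.1.submodule_iSup_eq_top]
    exact Submodule.mem_top
  refine Submodule.iSup_induction (motive := fun c =>
      evR r R q (FL r R) a (ev r R (FM r R) (p b c)) +
      evR r R s (FL r R) a (ev r R (FM r R) (q b c)) +
      evL r R q (FLM r R) (ev r R (FL r R) (p a b)) c -
      evL r R q (FLM r R) (ev r R (FL r R) (s a b)) c -
      evL r R s (FLM r R) (ev r R (FL r R) (q a b)) c -
      sgn α β • evR r R q (FM r R) b (ev r R (FL r R) (s a c)) = 0) G hcTop ?_ ?_ ?_
  · -- homogeneous case
    intro γ c' hc'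
    -- reduce the two instances of the compatibility to normal form
    have H1 := hcompat α β a b ha hb c'
    have t1e : evR r R q (FL r R) a (ev r R (FM r R) (p b c'))
        = NF r R (fun w => ev r R (FL r R) (q a w)) (FM r R) (p b c') :=
      red_R r R q hqB (FL r R) a (FM r R) (FM r R) (hint_r_mu r R q hqB (FL r R) a) _
    have t2e : evR r R p (FL r R) a (ev r R (FM r R) (q b c'))
        = NF r R (fun w => ev r R (FL r R) (p a w)) (FM r R) (q b c') :=
      red_R r R p hpB (FL r R) a (FM r R) (FM r R) (hint_r_mu r R p hpB (FL r R) a) _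
    have t3e : evL r R p (FLM r R) (ev r R (FL r R) (q a b)) c'
        = NF r R (fun w => ev r R (FLM r R) (p w c')) (FL r R) (q a b) :=
      red_L r R p hpB (FLM r R) c' (FL r R) (FL r R) (hint_l_lam r R p hpB (FLM r R) c') _
    have t4e : evR r R q (FM r R) b (ev r R (FL r R) (p a c'))
        = NF r R (fun w => ev r R (FM r R) (q b w)) (FL r R) (p a c') :=
      red_R r R q hqB (FM r R) b (FL r R) (FL r R) (hint_r_lam r R q hqB (FM r R) b) _
    have t5e : evR r R p (FM r R) b (ev r R (FL r R) (q a c'))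
        = NF r R (fun w => ev r R (FM r R) (p b w)) (FL r R) (q a c') :=
      red_R r R p hpB (FM r R) b (FL r R) (FL r R) (hint_r_lam r R p hpB (FM r R) b) _
    rw [t1e, t2e, t3e, t4e, t5e] at H1
    have H2 := hcompat β γ b c' hb hc' a
    have u1e : evR r R q (FL r R) b (ev r R (FM r R) (p c' a))
        = NF r R (fun w => ev r R (FL r R) (q b w)) (FM r R) (p c' a) :=
      red_R r R q hqB (FL r R) b (FM r R) (FM r R) (hint_r_mu r R q hqB (FL r R) b) _
    have u2e : evR r R p (FL r R) b (ev r R (FM r R) (q c' a))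
        = NF r R (fun w => ev r R (FL r R) (p b w)) (FM r R) (q c' a) :=
      red_R r R p hpB (FL r R) b (FM r R) (FM r R) (hint_r_mu r R p hpB (FL r R) b) _
    have u3e : evL r R p (FLM r R) (ev r R (FL r R) (q b c')) a
        = NF r R (fun w => ev r R (FLM r R) (p w a)) (FL r R) (q b c') :=
      red_L r R p hpB (FLM r R) a (FL r R) (FL r R) (hint_l_lam r R p hpB (FLM r R) a) _
    have u4e : evR r R q (FM r R) c' (ev r R (FL r R) (p b a))
        = NF r R (fun w => ev r R (FM r R) (q c' w)) (FL r R) (p b a) :=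
      red_R r R q hqB (FM r R) c' (FL r R) (FL r R) (hint_r_lam r R q hqB (FM r R) c') _
    have u5e : evR r R p (FM r R) c' (ev r R (FL r R) (q b a))
        = NF r R (fun w => ev r R (FM r R) (p c' w)) (FL r R) (q b a) :=
      red_R r R p hpB (FM r R) c' (FL r R) (FL r R) (hint_r_lam r R p hpB (FM r R) c') _
    rw [u1e, u2e, u3e, u4e, u5e] at H2
    -- apply the substitution λ ↦ μ, μ ↦ -λ-μ-T
    have H2s := congrArg (fun X => subHom r R (FM r R) (FNLM r R) X) H2
    simp only [map_add, map_sub, map_zsmul, map_zero] at H2s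
    have s1e := map_NF r R (subHom r R (FM r R) (FNLM r R))
      (fun w => ev r R (FL r R) (q b w)) (FM r R) (FNLM r R) (sub_FM r R) (p c' a)
    have s2e := map_NF r R (subHom r R (FM r R) (FNLM r R))
      (fun w => ev r R (FL r R) (p b w)) (FM r R) (FNLM r R) (sub_FM r R) (q c' a)
    have s3e := map_NF r R (subHom r R (FM r R) (FNLM r R))
      (fun w => ev r R (FLM r R) (p w a)) (FL r R) (FM r R) (sub_FL r R) (q b c')
    have s4e := map_NF r R (subHom r R (FM r R) (FNLM r R))
      (fun w => ev r R (FM r R) (q c' w)) (FL r R) (FM r R) (sub_FL r R) (p b a)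
    have s5e := map_NF r R (subHom r R (FM r R) (FNLM r R))
      (fun w => ev r R (FM r R) (p c' w)) (FL r R) (FM r R) (sub_FL r R) (q b a)
    rw [s1e, s2e, s3e, s4e, s5e] at H2s
    simp only [subev_FL r R, subev_FM r R, subev_FLM r R] at H2s
    -- convert the three skew terms in H2s
    have hadd2 := hadd_R r R p hpB (FM r R) b
    have hsmul2 := hsmul_R r R p hpB (FM r R) b
    have cS2 : NF r R (fun w => ev r R (FM r R) (p b w)) (FNLM r R) (q c' a)
        = -(sgn γ α • NF r R (fun w => ev r R (FM r R) (p b w)) (FL r R) (q a c')) := by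
      rw [hskew γ α c' a hc' ha, NF_Fneg r R _ hadd2 hsmul2, NF_Fzsmul r R _ hadd2 hsmul2,
        NF_vNeg r R _ hadd2 hsmul2 (FNLM r R) (FNLM_mem r R)
          (fun j => bT r R j + FM r R j)
          (fun j => (NN r R).add_mem (bT_mem r R j) (FM_mem r R j))
          (hT_R r R p hpS (FM r R) (FM_mem r R) b)]
      have fameq : (fun i => -(FNLM r R i) - (fun j => bT r R j + FM r R j) i) = FL r R := by
        funext i
        show -(-(bLam r R i) - bMu r R i - bT r R i) - (bT r R i + bMu r R i) = bLam r R i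
        abel
      rw [fameq]
    have cS4 : NF r R (fun w => ev r R (FNLM r R) (q c' w)) (FM r R) (p b a)
        = -(sgn γ (β + α) • NF r R (fun w => ev r R (FLM r R) (q w c')) (FM r R) (p b a)) := by
      rw [← NF_hzsmul, ← NF_hneg]
      apply NF_congr
      intro k
      show ev r R (FNLM r R) (q c' ((p b a) k))
        = -(sgn γ (β + α) • ev r R (FLM r R) (q ((p b a) k) c'))
      rw [hskew γ (β + α) c' ((p b a) k) hc' (hpP β α b a hb ha k), ev_neg, ev_zsmul,
        ev_vNeg r R (FNLM r R) (FNLM_mem r R)]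
      have fameq : (fun i => -(FNLM r R i) - bT r R i) = FLM r R := by
        funext i
        show -(-(bLam r R i) - bMu r R i - bT r R i) - bT r R i = bLam r R i + bMu r R i
        abel
      rw [fameq]
    have hadd5 := hadd_R r R p hpB (FNLM r R) c'
    have hsmul5 := hsmul_R r R p hpB (FNLM r R) c'
    have cS5 : NF r R (fun w => ev r R (FNLM r R) (p c' w)) (FM r R) (q b a)
        = -(sgn β α • NF r R (fun w => ev r R (FNLM r R) (p c' w)) (FL r R) (q a b)) := by
      rw [hskew β α b a hb ha, NF_Fneg r R _ hadd5 hsmul5, NF_Fzsmul r R _ hadd5 hsmul5,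
        NF_vNeg r R _ hadd5 hsmul5 (FM r R) (FM_mem r R)
          (fun j => bT r R j + FNLM r R j)
          (fun j => (NN r R).add_mem (bT_mem r R j) (FNLM_mem r R j))
          (hT_R r R p hpS (FNLM r R) (FNLM_mem r R) c')]
      have fameq : (fun i => -(FM r R i) - (fun j => bT r R j + FNLM r R j) i) = FL r R := by
        funext i
        show -(bMu r R i) - (bT r R i + (-(bLam r R i) - bMu r R i - bT r R i)) = bLam r R i
        abel
      rw [fameq]
    rw [cS2, cS4, cS5] at H2s
    -- now reduce the goal terms
    have g2a : evR r R s (FL r R) a (ev r R (FM r R) (q b c'))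
        = NF r R (fun w => ev r R (FL r R) (s a w)) (FM r R) (q b c') :=
      red_R r R s hs (FL r R) a (FM r R) (FM r R) (hint_r_mu r R s hs (FL r R) a) _
    have g2b : NF r R (fun w => ev r R (FL r R) (s a w)) (FM r R) (q b c')
        = NF r R (fun w => ev r R (FL r R) (p a w)) (FM r R) (q b c')
          + sgn α (β + γ) • NF r R (fun w => ev r R (FNL r R) (p w a)) (FM r R) (q b c') := by
      rw [← NF_hzsmul, ← NF_hadd]
      apply NF_congr
      intro k
      show ev r R (FL r R) (s a ((q b c') k))
        = ev r R (FL r R) (p a ((q b c') k))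
          + sgn α (β + γ) • ev r R (FNL r R) (p ((q b c') k) a)
      rw [hdef α (β + γ) a ((q b c') k) ha (hqP β γ b c' hb hc' k), ev_add, ev_zsmul,
        ev_vNeg r R (FL r R) (FL_mem r R)]
      rfl
    have g3 : evL r R q (FLM r R) (ev r R (FL r R) (p a b)) c'
        = NF r R (fun w => ev r R (FLM r R) (q w c')) (FL r R) (p a b) :=
      red_L r R q hqB (FLM r R) c' (FL r R) (FL r R) (hint_l_lam r R q hqB (FLM r R) c') _
    have e4a : ev r R (FL r R) (s a b)
        = ev r R (FL r R) (p a b) + sgn α β • ev r R (FNL r R) (p b a) := by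
      rw [hdef α β a b ha hb, ev_add, ev_zsmul, ev_vNeg r R (FL r R) (FL_mem r R)]
      rfl
    have g4 : evL r R q (FLM r R) (ev r R (FL r R) (s a b)) c'
        = NF r R (fun w => ev r R (FLM r R) (q w c')) (FL r R) (p a b)
          + sgn α β • NF r R (fun w => ev r R (FLM r R) (q w c')) (FM r R) (p b a) := by
      rw [e4a, evL_add₁ r R q hqB (FLM r R) c', evL_zsmul₁ r R q hqB (FLM r R) c',
        red_L r R q hqB (FLM r R) c' (FL r R) (FL r R)
          (hint_l_lam r R q hqB (FLM r R) c') (p a b),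
        red_L r R q hqB (FLM r R) c' (FNL r R) (FM r R)
          (hint_l_fnl r R q hqB hqS c') (p b a)]
    have g5a : evL r R s (FLM r R) (ev r R (FL r R) (q a b)) c'
        = NF r R (fun w => ev r R (FLM r R) (s w c')) (FL r R) (q a b) :=
      red_L r R s hs (FLM r R) c' (FL r R) (FL r R) (hint_l_lam r R s hs (FLM r R) c') _
    have g5b : NF r R (fun w => ev r R (FLM r R) (s w c')) (FL r R) (q a b)
        = NF r R (fun w => ev r R (FLM r R) (p w c')) (FL r R) (q a b)
          + sgn (α + β) γ • NF r R (fun w => ev r R (FNLM r R) (p c' w)) (FL r R) (q a b) := by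
      rw [← NF_hzsmul, ← NF_hadd]
      apply NF_congr
      intro k
      show ev r R (FLM r R) (s ((q a b) k) c')
        = ev r R (FLM r R) (p ((q a b) k) c')
          + sgn (α + β) γ • ev r R (FNLM r R) (p c' ((q a b) k))
      rw [hdef (α + β) γ ((q a b) k) c' (hqP α β a b ha hb k) hc', ev_add, ev_zsmul,
        ev_vNeg r R (FLM r R) (FLM_mem r R)]
      have fameq : (fun i => -(FLM r R i) - bT r R i) = FNLM r R := by
        funext i
        show -(bLam r R i + bMu r R i) - bT r R i = -(bLam r R i) - bMu r R i - bT r R i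
        abel
      rw [fameq]
    have e6a : ev r R (FL r R) (s a c')
        = ev r R (FL r R) (p a c') + sgn α γ • ev r R (FNL r R) (p c' a) := by
      rw [hdef α γ a c' ha hc', ev_add, ev_zsmul, ev_vNeg r R (FL r R) (FL_mem r R)]
      rfl
    have g6 : evR r R q (FM r R) b (ev r R (FL r R) (s a c'))
        = NF r R (fun w => ev r R (FM r R) (q b w)) (FL r R) (p a c')
          + sgn α γ • NF r R (fun w => ev r R (FM r R) (q b w)) (FNLM r R) (p c' a) := by
      rw [e6a, evR_add r R q hqB (FM r R) b, evR_zsmul r R q hqB (FM r R) b,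
        red_R r R q hqB (FM r R) b (FL r R) (FL r R)
          (hint_r_lam r R q hqB (FM r R) b) (p a c'),
        red_R r R q hqB (FM r R) b (FNL r R) (FNLM r R)
          (hint_r_fnl r R q hqB hqS b) (p c' a)]
    rw [t1e, g2a, g2b, g3, g4, g5a, g5b, g6]
    -- normalize parities of the signs
    rw [sgn_add_right α β γ, sgn_add_left α β γ]
    rw [sgn_comm γ α, sgn_comm β α, sgn_add_right γ β α, sgn_comm γ β, sgn_comm γ α] at H2s
    rcases sgn_cases α β with h1 | h1 <;> rcases sgn_cases α γ with h2 | h2 <;>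
      rcases sgn_cases β γ with h3 | h3 <;>
      simp only [h1, h2, h3, one_mul, mul_one, neg_mul, mul_neg, neg_neg, one_smul, neg_smul,
        smul_neg, sub_neg_eq_add] at H1 H2s ⊢ <;>
      first
        | linear_combination (norm := abel1) H1 - H2s
        | linear_combination (norm := abel1) H1 + H2s
  · -- zero case
    beta_reduce
    rw [bz_right r R hpB b, bz_right r R hqB b, bz_right r R hs a,
      ev_zero r R (FM r R), ev_zero r R (FL r R),
      evR_zero r R q hqB (FL r R) a, evR_zero r R s hs (FL r R) a,
      evR_zero r R q hqB (FM r R) b,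
      evL_zero₂ r R q hqB (FLM r R), evL_zero₂ r R q hqB (FLM r R),
      evL_zero₂ r R s hs (FLM r R)]
    simp
  · -- additivity
    intro x y hx hy
    beta_reduce
    beta_reduce at hx hy
    rw [hpB.2.1 b x y, hqB.2.1 b x y, hs.2.1 a x y,
      ev_add r R (FM r R), ev_add r R (FM r R), ev_add r R (FL r R),
      evR_add r R q hqB (FL r R) a, evR_add r R s hs (FL r R) a,
      evR_add r R q hqB (FM r R) b,
      evL_add₂ r R q hqB (FLM r R) _ x y, evL_add₂ r R q hqB (FLM r R) _ x y,
      evL_add₂ r R s hs (FLM r R) _ x y, smul_add]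
    linear_combination (norm := abel) hx + hy
end CA
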